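/- arXiv:2010.08828 — 2 statements merged into one kernel-verified Lean document; each statement's English description precedes it below -/
import Mathlib

section
/- Let T be a tree on n vertices with matching number μ(T). Then λ_{μ(T)+1}(Δ^T) ≤ 2 ≤ λ_{n-μ(T)+1}(Δ^T), where Δ^T is the combinatorial Laplacian of T. -/
open Classical in
/-- The discrete magnetic Laplacian of a simple graph `G` on `Fin n` with magnetic
potential `α`. -/
noncomputable def magLap {n : ℕ} (G : SimpleGraph (Fin n)) (α : Fin n → Fin n → ℝ) :
    Matrix (Fin n) (Fin n) ℂ :=
  Matrix.of fun u v =>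
    if u = v then ((G.neighborSet u).ncard : ℂ)
    else if G.Adj u v then -Complex.exp (α u v * Complex.I) else 0

lemma magLap_isHermitian {n : ℕ} (G : SimpleGraph (Fin n)) (α : Fin n → Fin n → ℝ)
    (hα : ∀ u v, α v u = -α u v) : (magLap G α).IsHermitian := by
  rw [Matrix.IsHermitian]
  ext u v
  simp only [Matrix.conjTranspose_apply, magLap, Matrix.of_apply]
  by_cases huv : u = v
  · subst huv; simp
  · have hvu : ¬ v = u := fun h => huv h.symm
    rw [if_neg hvu, if_neg huv]
    by_cases hadj : G.Adj u v
    · rw [if_pos hadj.symm, if_pos hadj, star_neg]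
      have h1 : star (Complex.exp ((α v u : ℂ) * Complex.I)) =
          Complex.exp ((starRingEnd ℂ) ((α v u : ℂ) * Complex.I)) :=
        (Complex.exp_conj _).symm
      rw [h1]
      congr 1
      rw [hα u v]
      simp [map_mul, Complex.conj_ofReal, Complex.conj_I]
    · rw [if_neg (fun h => hadj h.symm), if_neg hadj, star_zero]

/-- The `k`-th smallest eigenvalue (1-indexed, with multiplicity) of a Hermitian
matrix, as an extended real number; `⊥` for `k = 0` and `⊤` for `k > n`. -/
noncomputable def lamb {n : ℕ} {A : Matrix (Fin n) (Fin n) ℂ} (hA : A.IsHermitian) (k : ℕ) :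
    EReal :=
  if h : 1 ≤ k ∧ k ≤ n then
    (((hA.eigenvalues ∘ Tuple.sort hA.eigenvalues) ⟨k - 1, by omega⟩ : ℝ) : EReal)
  else if k = 0 then ⊥ else ⊤

/-- The matching number of a graph: the maximal number of pairwise independent edges. -/
noncomputable def matchingNumber {n : ℕ} (G : SimpleGraph (Fin n)) : ℕ :=
  sSup {k : ℕ | ∃ M : G.Subgraph, M.IsMatching ∧ M.edgeSet.ncard = k}





open Classical Matrix

section Eig
variable {n : ℕ} {A : Matrix (Fin n) (Fin n) ℂ}

/-- The eigenvector basis reindexed so that eigenvalues are sorted increasingly. -/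
noncomputable def sortedBasis (hA : A.IsHermitian) :
    OrthonormalBasis (Fin n) ℂ (EuclideanSpace ℂ (Fin n)) :=
  hA.eigenvectorBasis.reindex (Tuple.sort hA.eigenvalues).symm

lemma sortedBasis_mulVec (hA : A.IsHermitian) (i : Fin n) :
    A *ᵥ ⇑(sortedBasis hA i) =
      ((hA.eigenvalues ∘ Tuple.sort hA.eigenvalues) i : ℂ) • ⇑(sortedBasis hA i) := by
  simp only [sortedBasis, OrthonormalBasis.reindex_apply, Equiv.symm_symm, Function.comp_apply]
  rw [hA.mulVec_eigenvectorBasis]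
  norm_num [Complex.real_smul]

lemma sortedBasis_repr_mulVec (hA : A.IsHermitian) (x : EuclideanSpace ℂ (Fin n)) (i : Fin n) :
    (sortedBasis hA).repr ((WithLp.equiv 2 _).symm (A *ᵥ ⇑x)) i =
      ((hA.eigenvalues ∘ Tuple.sort hA.eigenvalues) i : ℂ) * (sortedBasis hA).repr x i := by
  rw [OrthonormalBasis.repr_apply_apply, OrthonormalBasis.repr_apply_apply]
  have h1 : (inner ℂ (sortedBasis hA i) ((WithLp.equiv 2 _).symm (A *ᵥ ⇑x))) =
      star ⇑(sortedBasis hA i) ⬝ᵥ (A *ᵥ ⇑x) :=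
    (EuclideanSpace.inner_eq_star_dotProduct _ _).trans (dotProduct_comm _ _)
  have h2 : (inner ℂ (sortedBasis hA i) x) = star ⇑(sortedBasis hA i) ⬝ᵥ ⇑x :=
    (EuclideanSpace.inner_eq_star_dotProduct _ _).trans (dotProduct_comm _ _)
  rw [h1, h2, Matrix.dotProduct_mulVec]
  have h3 : star ⇑(sortedBasis hA i) ᵥ* A = star (Aᴴ *ᵥ ⇑(sortedBasis hA i)) := by
    rw [Matrix.star_mulVec, Matrix.conjTranspose_conjTranspose]
  rw [h3, hA.eq, sortedBasis_mulVec hA i, star_smul, smul_dotProduct]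
  simp [Complex.conj_ofReal]

end Eig

section Eig2
variable {n : ℕ} {A : Matrix (Fin n) (Fin n) ℂ}

lemma inner_self_re (y : EuclideanSpace ℂ (Fin n)) :
    (inner ℂ y y).re = ∑ i, ‖y i‖ ^ 2 := by
  rw [PiLp.inner_apply]
  rw [Complex.re_sum]
  congr 1; ext i
  simp [RCLike.inner_apply, RCLike.conj_mul]
  norm_cast

lemma quad_eq_sum (hA : A.IsHermitian) (x : EuclideanSpace ℂ (Fin n)) :
    (star ⇑x ⬝ᵥ (A *ᵥ ⇑x)).re =
      ∑ i, (hA.eigenvalues ∘ Tuple.sort hA.eigenvalues) i * ‖(sortedBasis hA).repr x i‖ ^ 2 := by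
  have h1 : (star ⇑x ⬝ᵥ (A *ᵥ ⇑x)) = (inner ℂ x ((WithLp.equiv 2 _).symm (A *ᵥ ⇑x))) :=
    ((EuclideanSpace.inner_eq_star_dotProduct _ _).trans (dotProduct_comm _ _)).symm
  rw [h1, ← LinearIsometryEquiv.inner_map_map (sortedBasis hA).repr, PiLp.inner_apply]
  rw [Complex.re_sum]
  congr 1; ext i
  rw [RCLike.inner_apply, sortedBasis_repr_mulVec hA x i]
  rw [show (((hA.eigenvalues ∘ Tuple.sort hA.eigenvalues) i : ℂ) * (sortedBasis hA).repr x i) *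
      (starRingEnd ℂ) ((sortedBasis hA).repr x i) =
      ((hA.eigenvalues ∘ Tuple.sort hA.eigenvalues) i : ℂ) *
        ((starRingEnd ℂ) ((sortedBasis hA).repr x i) * (sortedBasis hA).repr x i) by ring]
  rw [RCLike.conj_mul]
  simp [← Complex.ofReal_pow, ← Complex.ofReal_mul]

lemma normsq_eq_sum (hA : A.IsHermitian) (x : EuclideanSpace ℂ (Fin n)) :
    ∑ i, ‖x i‖ ^ 2 = ∑ i, ‖(sortedBasis hA).repr x i‖ ^ 2 := by
  rw [← inner_self_re x, ← inner_self_re ((sortedBasis hA).repr x),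
    LinearIsometryEquiv.inner_map_map]

lemma repr_eq_zero_of_mem_span (hA : A.IsHermitian) (s : Set (Fin n))
    (x : EuclideanSpace ℂ (Fin n))
    (hx : x ∈ Submodule.span ℂ (⇑(sortedBasis hA) '' s)) {i : Fin n} (hi : i ∉ s) :
    (sortedBasis hA).repr x i = 0 := by
  induction hx using Submodule.span_induction with
  | mem y hy =>
    obtain ⟨j, hj, rfl⟩ := hy
    rw [OrthonormalBasis.repr_self]
    have : j ≠ i := fun h => hi (h ▸ hj)
    simp [EuclideanSpace.single_apply, this.symm]
  | zero => simp
  | add y z _ _ hy hz => simp [map_add, hy, hz]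
  | smul c y _ hy => simp [_root_.map_smul, hy]

end Eig2

section Eig3
variable {n : ℕ} {A : Matrix (Fin n) (Fin n) ℂ}

lemma span_orthofamily_finrank (hA : A.IsHermitian) (s : Set (Fin n)) :
    Module.finrank ℂ (Submodule.span ℂ (⇑(sortedBasis hA) '' s)) = s.ncard := by
  have hli : LinearIndependent ℂ (fun j : s => sortedBasis hA j) :=
    (sortedBasis hA).orthonormal.linearIndependent.comp _ Subtype.val_injective
  have hrange : Set.range (fun j : s => sortedBasis hA j) = ⇑(sortedBasis hA) '' s := by
    rw [← Set.image_eq_range]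
  rw [← hrange, finrank_span_eq_card hli, ← Nat.card_eq_fintype_card, Nat.card_coe_set_eq]

lemma exists_ne_zero_mem_inf (U W : Submodule ℂ (EuclideanSpace ℂ (Fin n)))
    (h : n < Module.finrank ℂ U + Module.finrank ℂ W) :
    ∃ x : EuclideanSpace ℂ (Fin n), x ≠ 0 ∧ x ∈ U ∧ x ∈ W := by
  have h1 := Submodule.finrank_sup_add_finrank_inf_eq U W
  have h2 : Module.finrank ℂ ↥(U ⊔ W) ≤ n := by
    have := Submodule.finrank_le (U ⊔ W)
    simpa [finrank_euclideanSpace] using this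
  have h3 : 0 < Module.finrank ℂ ↥(U ⊓ W) := by omega
  obtain ⟨⟨x, hx⟩, hxne⟩ := Module.finrank_pos_iff_exists_ne_zero.mp h3
  refine ⟨x, ?_, hx.1, hx.2⟩
  intro h0
  exact hxne (by simp [Submodule.mk_eq_zero, h0])

lemma sum_normsq_pos {x : EuclideanSpace ℂ (Fin n)} (hx : x ≠ 0) :
    0 < ∑ i, ‖x i‖ ^ 2 := by
  have h1 : ∃ i, x i ≠ 0 := by
    by_contra h
    push_neg at h
    exact hx (by ext i; simpa using h i)
  obtain ⟨i, hi⟩ := h1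
  have : (0:ℝ) < ‖x i‖ ^ 2 := pow_pos (norm_pos_iff.mpr hi) 2
  refine Finset.sum_pos' (fun j _ => by positivity) ⟨i, Finset.mem_univ i, this⟩

lemma eig_le_of_subspace (hA : A.IsHermitian) (m : Fin n) (c : ℝ)
    (W : Submodule ℂ (EuclideanSpace ℂ (Fin n)))
    (hW : (m : ℕ) + 1 ≤ Module.finrank ℂ W)
    (hQ : ∀ x : EuclideanSpace ℂ (Fin n), x ∈ W →
      (star ⇑x ⬝ᵥ (A *ᵥ ⇑x)).re ≤ c * ∑ i, ‖x i‖ ^ 2) :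
    (hA.eigenvalues ∘ Tuple.sort hA.eigenvalues) m ≤ c := by
  set g := hA.eigenvalues ∘ Tuple.sort hA.eigenvalues with hg
  set U : Submodule ℂ (EuclideanSpace ℂ (Fin n)) :=
    Submodule.span ℂ (⇑(sortedBasis hA) '' Set.Ici m) with hUdef
  have hU : Module.finrank ℂ U = n - (m : ℕ) := by
    rw [hUdef, span_orthofamily_finrank hA]
    rw [← Nat.card_coe_set_eq, Nat.card_eq_fintype_card]
    exact (Fintype.card_Ici m).trans (Fin.card_Ici m)
  obtain ⟨x, hxne, hxU, hxW⟩ := exists_ne_zero_mem_inf U W (by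
    have := m.isLt; omega)
  have hrepr : ∀ i, i ∉ Set.Ici m → (sortedBasis hA).repr x i = 0 :=
    fun i hi => repr_eq_zero_of_mem_span hA _ x hxU hi
  have hlow : g m * ∑ i, ‖x i‖ ^ 2 ≤ (star ⇑x ⬝ᵥ (A *ᵥ ⇑x)).re := by
    rw [quad_eq_sum hA x, normsq_eq_sum hA x, Finset.mul_sum]
    refine Finset.sum_le_sum fun i _ => ?_
    by_cases hi : i ∈ Set.Ici m
    · have : g m ≤ g i := Tuple.monotone_sort hA.eigenvalues hi
      nlinarith [sq_nonneg ‖(sortedBasis hA).repr x i‖]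
    · rw [hrepr i hi]; simp
  have hup := hQ x hxW
  have hN := sum_normsq_pos hxne
  exact le_of_mul_le_mul_right (hlow.trans hup) hN

lemma eig_ge_of_subspace (hA : A.IsHermitian) (m : Fin n) (c : ℝ)
    (W : Submodule ℂ (EuclideanSpace ℂ (Fin n)))
    (hW : n - (m : ℕ) ≤ Module.finrank ℂ W)
    (hQ : ∀ x : EuclideanSpace ℂ (Fin n), x ∈ W →
      c * ∑ i, ‖x i‖ ^ 2 ≤ (star ⇑x ⬝ᵥ (A *ᵥ ⇑x)).re) :
    c ≤ (hA.eigenvalues ∘ Tuple.sort hA.eigenvalues) m := by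
  set g := hA.eigenvalues ∘ Tuple.sort hA.eigenvalues with hg
  set U : Submodule ℂ (EuclideanSpace ℂ (Fin n)) :=
    Submodule.span ℂ (⇑(sortedBasis hA) '' Set.Iic m) with hUdef
  have hU : Module.finrank ℂ U = (m : ℕ) + 1 := by
    rw [hUdef, span_orthofamily_finrank hA]
    rw [← Nat.card_coe_set_eq, Nat.card_eq_fintype_card]
    exact (Fintype.card_Iic m).trans (Fin.card_Iic m)
  obtain ⟨x, hxne, hxU, hxW⟩ := exists_ne_zero_mem_inf U W (by
    have := m.isLt; omega)
  have hrepr : ∀ i, i ∉ Set.Iic m → (sortedBasis hA).repr x i = 0 :=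
    fun i hi => repr_eq_zero_of_mem_span hA _ x hxU hi
  have hhigh : (star ⇑x ⬝ᵥ (A *ᵥ ⇑x)).re ≤ g m * ∑ i, ‖x i‖ ^ 2 := by
    rw [quad_eq_sum hA x, normsq_eq_sum hA x, Finset.mul_sum]
    refine Finset.sum_le_sum fun i _ => ?_
    by_cases hi : i ∈ Set.Iic m
    · have : g i ≤ g m := Tuple.monotone_sort hA.eigenvalues hi
      nlinarith [sq_nonneg ‖(sortedBasis hA).repr x i‖]
    · rw [hrepr i hi]; simp
  have hlow := hQ x hxW
  have hN := sum_normsq_pos hxne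
  exact le_of_mul_le_mul_right (hlow.trans hhigh) hN

end Eig3
section GraphQuad
variable {n : ℕ} (T : SimpleGraph (Fin n))

lemma magLap_apply (u v : Fin n) :
    magLap T (fun _ _ => (0:ℝ)) u v =
      if u = v then ((T.neighborSet u).ncard : ℂ) else if T.Adj u v then -1 else 0 := by
  simp [magLap]

lemma ncard_neighborSet_eq_sum (u : Fin n) :
    ((T.neighborSet u).ncard : ℂ) = ∑ v, if T.Adj u v then (1:ℂ) else 0 := by
  have h : T.neighborSet u = ↑(Finset.univ.filter (fun v => T.Adj u v)) := by
    ext v; simp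
  rw [h, Set.ncard_coe_finset, Finset.sum_boole]

lemma magLap_row (x : Fin n → ℂ) (u : Fin n) :
    ((magLap T (fun _ _ => (0:ℝ))) *ᵥ x) u = ∑ v, if T.Adj u v then x u - x v else 0 := by
  show (fun j => magLap T (fun _ _ => (0:ℝ)) u j) ⬝ᵥ x = _
  rw [dotProduct]
  have h1 : ∀ v, magLap T (fun _ _ => (0:ℝ)) u v * x v =
      (if u = v then ((T.neighborSet u).ncard : ℂ) * x v else 0) +
      (if T.Adj u v then -x v else 0) := by
    intro v
    rw [magLap_apply]
    by_cases huv : u = v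
    · subst huv
      simp [T.irrefl]
    · by_cases hadj : T.Adj u v <;> simp [huv, hadj, sub_eq_add_neg]
  rw [Finset.sum_congr rfl fun v _ => h1 v, Finset.sum_add_distrib]
  rw [Finset.sum_ite_eq (Finset.univ) u (fun v => ((T.neighborSet u).ncard : ℂ) * x v)]
  simp only [Finset.mem_univ, if_true]
  rw [ncard_neighborSet_eq_sum, Finset.sum_mul]
  rw [← Finset.sum_add_distrib]
  congr 1; ext v
  by_cases hadj : T.Adj u v <;> simp [hadj, sub_eq_add_neg]

lemma quad_form_eq (x : Fin n → ℂ) :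
    2 * (star x ⬝ᵥ ((magLap T (fun _ _ => (0:ℝ))) *ᵥ x)).re =
      ∑ u, ∑ v, if T.Adj u v then ‖x u - x v‖ ^ 2 else 0 := by
  have key : (2:ℂ) * (star x ⬝ᵥ ((magLap T (fun _ _ => (0:ℝ))) *ᵥ x)) =
      ∑ u, ∑ v, if T.Adj u v then (starRingEnd ℂ) (x u - x v) * (x u - x v) else 0 := by
    have h1 : star x ⬝ᵥ ((magLap T (fun _ _ => (0:ℝ))) *ᵥ x) =
        ∑ u, ∑ v, if T.Adj u v then (starRingEnd ℂ) (x u) * (x u - x v) else 0 := by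
      rw [dotProduct]
      refine Finset.sum_congr rfl fun u _ => ?_
      rw [magLap_row, Pi.star_apply, Finset.mul_sum]
      refine Finset.sum_congr rfl fun v _ => ?_
      by_cases hadj : T.Adj u v <;> simp [hadj, RCLike.star_def]
    have h2 : star x ⬝ᵥ ((magLap T (fun _ _ => (0:ℝ))) *ᵥ x) =
        ∑ u, ∑ v, if T.Adj u v then (starRingEnd ℂ) (x v) * (x v - x u) else 0 := by
      rw [h1, Finset.sum_comm]
      refine Finset.sum_congr rfl fun u _ => Finset.sum_congr rfl fun v _ => ?_
      by_cases hadj : T.Adj u v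
      · rw [if_pos hadj, if_pos (T.adj_symm hadj)]
      · rw [if_neg hadj, if_neg (fun h => hadj (T.adj_symm h))]
    calc (2:ℂ) * (star x ⬝ᵥ ((magLap T (fun _ _ => (0:ℝ))) *ᵥ x))
        = star x ⬝ᵥ ((magLap T (fun _ _ => (0:ℝ))) *ᵥ x) +
          star x ⬝ᵥ ((magLap T (fun _ _ => (0:ℝ))) *ᵥ x) := by ring
      _ = ∑ u, ∑ v, if T.Adj u v then (starRingEnd ℂ) (x u - x v) * (x u - x v) else 0 := by
          nth_rewrite 2 [h2]; rw [h1]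
          rw [← Finset.sum_add_distrib]
          refine Finset.sum_congr rfl fun u _ => ?_
          rw [← Finset.sum_add_distrib]
          refine Finset.sum_congr rfl fun v _ => ?_
          by_cases hadj : T.Adj u v
          · simp only [if_pos hadj, map_sub]; ring
          · simp [hadj]
  have := congrArg Complex.re key
  rw [Complex.mul_re] at this
  simp only [Complex.re_ofNat, Complex.im_ofNat, zero_mul, sub_zero] at this
  rw [this, Complex.re_sum]
  refine Finset.sum_congr rfl fun u _ => ?_
  rw [Complex.re_sum]
  refine Finset.sum_congr rfl fun v _ => ?_
  by_cases hadj : T.Adj u v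
  · rw [if_pos hadj, if_pos hadj, RCLike.conj_mul]
    norm_cast
  · simp [hadj]

end GraphQuad

section MatchingQuad
variable {n : ℕ} {T : SimpleGraph (Fin n)} {M : T.Subgraph}

lemma matching_row_sum (hM : M.IsMatching) (c : ℝ) (u : Fin n) :
    ∑ v, (if M.Adj u v then c else 0) = if u ∈ M.verts then c else 0 := by
  by_cases hu : u ∈ M.verts
  · obtain ⟨w, hw, huniq⟩ := hM hu
    have hfil : Finset.univ.filter (fun v => M.Adj u v) = {w} := by
      ext v
      simp only [Finset.mem_filter, Finset.mem_univ, true_and, Finset.mem_singleton]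
      exact ⟨fun h => huniq v h, fun h => h ▸ hw⟩
    rw [← Finset.sum_filter, hfil, Finset.sum_singleton, if_pos hu]
  · have hfil : ∀ v, ¬ M.Adj u v := fun v h => hu (M.edge_vert h)
    simp [hfil, hu]

end MatchingQuad

section MatchingQuad2
variable {n : ℕ} {T : SimpleGraph (Fin n)} {M : T.Subgraph}

lemma quad_le_of_matching (hM : M.IsMatching) (x : Fin n → ℂ)
    (hx : ∀ u v, T.Adj u v → ¬ M.Adj u v → x u = x v) :
    ∑ u, ∑ v, (if T.Adj u v then ‖x u - x v‖ ^ 2 else 0) ≤ 4 * ∑ u, ‖x u‖ ^ 2 := by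
  have step1 : ∑ u, ∑ v, (if T.Adj u v then ‖x u - x v‖ ^ 2 else 0) ≤
      ∑ u, ∑ v, (if M.Adj u v then 2 * ‖x u‖ ^ 2 + 2 * ‖x v‖ ^ 2 else 0) := by
    refine Finset.sum_le_sum fun u _ => Finset.sum_le_sum fun v _ => ?_
    by_cases hadj : T.Adj u v
    · by_cases hm : M.Adj u v
      · rw [if_pos hadj, if_pos hm]
        have h1 : ‖x u - x v‖ ≤ ‖x u‖ + ‖x v‖ := norm_sub_le _ _
        nlinarith [norm_nonneg (x u - x v), norm_nonneg (x u), norm_nonneg (x v),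
          sq_nonneg (‖x u‖ - ‖x v‖), sq_nonneg (‖x u‖ + ‖x v‖)]
      · rw [if_pos hadj, if_neg hm, hx u v hadj hm]
        simp
    · rw [if_neg hadj, if_neg (fun hm => hadj (M.adj_sub hm))]
  have step2 : ∑ u, ∑ v, (if M.Adj u v then 2 * ‖x u‖ ^ 2 + 2 * ‖x v‖ ^ 2 else 0) =
      (∑ u, ∑ v, (if M.Adj u v then 2 * ‖x u‖ ^ 2 else 0)) +
      (∑ u, ∑ v, (if M.Adj u v then 2 * ‖x v‖ ^ 2 else 0)) := by
    rw [← Finset.sum_add_distrib]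
    refine Finset.sum_congr rfl fun u _ => ?_
    rw [← Finset.sum_add_distrib]
    refine Finset.sum_congr rfl fun v _ => ?_
    by_cases hm : M.Adj u v <;> simp [hm]
  have step3 : ∑ u, ∑ v, (if M.Adj u v then 2 * ‖x v‖ ^ 2 else 0) =
      ∑ u, ∑ v, (if M.Adj u v then 2 * ‖x u‖ ^ 2 else 0) := by
    rw [Finset.sum_comm]
    refine Finset.sum_congr rfl fun u _ => Finset.sum_congr rfl fun v _ => ?_
    by_cases hm : M.Adj u v
    · rw [if_pos hm, if_pos (hm.symm)]
    · rw [if_neg hm, if_neg (fun h => hm h.symm)]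
  have step4 : ∑ u, ∑ v, (if M.Adj u v then 2 * ‖x u‖ ^ 2 else 0) ≤ 2 * ∑ u, ‖x u‖ ^ 2 := by
    rw [Finset.mul_sum]
    refine Finset.sum_le_sum fun u _ => ?_
    rw [matching_row_sum hM]
    by_cases hu : u ∈ M.verts
    · rw [if_pos hu]
    · rw [if_neg hu]
      positivity
  calc ∑ u, ∑ v, (if T.Adj u v then ‖x u - x v‖ ^ 2 else 0)
      ≤ _ := step1
    _ = _ := step2
    _ ≤ 2 * ∑ u, ‖x u‖ ^ 2 + 2 * ∑ u, ‖x u‖ ^ 2 := by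
        rw [step3]; exact add_le_add step4 step4
    _ = 4 * ∑ u, ‖x u‖ ^ 2 := by ring

lemma quad_ge_of_matching (hM : M.IsMatching) (x : Fin n → ℂ)
    (hx0 : ∀ v, v ∉ M.verts → x v = 0)
    (hx2 : ∀ u v, M.Adj u v → x u = - x v) :
    4 * ∑ u, ‖x u‖ ^ 2 ≤ ∑ u, ∑ v, (if T.Adj u v then ‖x u - x v‖ ^ 2 else 0) := by
  have step1 : ∑ u, ∑ v, (if M.Adj u v then (4 : ℝ) * ‖x u‖ ^ 2 else 0) ≤
      ∑ u, ∑ v, (if T.Adj u v then ‖x u - x v‖ ^ 2 else 0) := by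
    refine Finset.sum_le_sum fun u _ => Finset.sum_le_sum fun v _ => ?_
    by_cases hm : M.Adj u v
    · rw [if_pos hm, if_pos (M.adj_sub hm)]
      have hxv : x v = - x u := by
        have := hx2 v u hm.symm
        simpa using this
      rw [hxv, sub_neg_eq_add]
      have : x u + x u = (2:ℂ) * x u := by ring
      rw [this, norm_mul]
      norm_num
      ring_nf
      exact le_refl _
    · rw [if_neg hm]
      by_cases hadj : T.Adj u v
      · rw [if_pos hadj]; positivity
      · rw [if_neg hadj]
  have step2 : ∑ u, ∑ v, (if M.Adj u v then (4 : ℝ) * ‖x u‖ ^ 2 else 0) =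
      4 * ∑ u, ‖x u‖ ^ 2 := by
    rw [Finset.mul_sum]
    refine Finset.sum_congr rfl fun u _ => ?_
    rw [matching_row_sum hM]
    by_cases hu : u ∈ M.verts
    · rw [if_pos hu]
    · rw [if_neg hu, hx0 u hu]
      simp
  rw [← step2]
  exact step1

end MatchingQuad2

section MatchingCount
variable {n : ℕ} {T : SimpleGraph (Fin n)} {M : T.Subgraph}

lemma out_mk_eq {α : Type*} (e : Sym2 α) : s(e.out.1, e.out.2) = e := by
  exact Quot.out_eq e

lemma edge_out_adj {e : Sym2 (Fin n)} (he : e ∈ M.edgeSet) : M.Adj e.out.1 e.out.2 := by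
  rw [← out_mk_eq e] at he
  exact SimpleGraph.Subgraph.mem_edgeSet.mp he

lemma matching_edge_eq_of_shared (hM : M.IsMatching) {e f : Sym2 (Fin n)}
    (he : e ∈ M.edgeSet) (hf : f ∈ M.edgeSet) {w : Fin n} (hwe : w ∈ e) (hwf : w ∈ f) :
    e = f := by
  obtain ⟨a, rfl⟩ := Sym2.mem_iff_exists.mp hwe
  obtain ⟨b, rfl⟩ := Sym2.mem_iff_exists.mp hwf
  have ha : M.Adj w a := SimpleGraph.Subgraph.mem_edgeSet.mp he
  have hb : M.Adj w b := SimpleGraph.Subgraph.mem_edgeSet.mp hf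
  obtain ⟨c, hc, huniq⟩ := hM (M.edge_vert ha)
  rw [huniq a ha, huniq b hb]

lemma matching_two_mul_card (hM : M.IsMatching) :
    2 * M.edgeSet.ncard ≤ M.verts.ncard := by
  have hF : ∃ F : M.edgeSet × Bool → M.verts, Function.Injective F := by
    refine ⟨fun p => if p.2 then ⟨p.1.val.out.1, M.edge_vert (edge_out_adj p.1.property)⟩
      else ⟨p.1.val.out.2, M.edge_vert (edge_out_adj p.1.property).symm⟩, ?_⟩
    rintro ⟨e, b⟩ ⟨f, c⟩ hef
    have hval : (if b then e.val.out.1 else e.val.out.2) =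
        (if c then f.val.out.1 else f.val.out.2) := by
      by_cases hb : b <;> by_cases hc : c <;>
        simpa [hb, hc] using congrArg Subtype.val hef
    set w := if b then e.val.out.1 else e.val.out.2 with hw
    have hwe : w ∈ e.val := by
      by_cases hb : b <;> simp only [hw, hb, if_true, if_false, Bool.false_eq_true] <;>
        first
          | exact Sym2.out_fst_mem e.val
          | exact Sym2.out_snd_mem e.val
    have hwf : w ∈ f.val := by
      rw [hval]
      by_cases hc : c <;> simp only [hc, if_true, if_false, Bool.false_eq_true] <;>
        first
          | exact Sym2.out_fst_mem f.val
          | exact Sym2.out_snd_mem f.val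
    have hefeq : e = f :=
      Subtype.ext (matching_edge_eq_of_shared hM e.property f.property hwe hwf)
    subst hefeq
    have hne : e.val.out.1 ≠ e.val.out.2 := (edge_out_adj e.property).ne
    have hbc : b = c := by
      by_cases hb : b <;> by_cases hc : c <;>
        simp_all [hb, hc]
    rw [hbc]
  obtain ⟨F, hFinj⟩ := hF
  have h1 := Nat.card_le_card_of_injective F hFinj
  rw [Nat.card_prod, Nat.card_coe_set_eq, Nat.card_coe_set_eq,
    Nat.card_eq_fintype_card, Fintype.card_bool] at h1
  omega

end MatchingCount

section Subspaces
variable {n : ℕ} (T : SimpleGraph (Fin n)) (M : T.Subgraph)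

noncomputable def psi1 : (Fin n → ℂ) →ₗ[ℂ] (↥(T.edgeSet \ M.edgeSet) → ℂ) where
  toFun x := fun e => x ((e : Sym2 (Fin n)).out.1) - x ((e : Sym2 (Fin n)).out.2)
  map_add' x y := by funext e; simp; ring
  map_smul' c x := by funext e; simp; ring

noncomputable def psi2 : (Fin n → ℂ) →ₗ[ℂ] ((↥(M.vertsᶜ) → ℂ) × (↥M.edgeSet → ℂ)) where
  toFun x := (fun v => x v.val,
    fun e => x ((e : Sym2 (Fin n)).out.1) + x ((e : Sym2 (Fin n)).out.2))
  map_add' x y := by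
    refine Prod.ext ?_ ?_ <;> funext e <;> simp <;> ring
  map_smul' c x := by
    refine Prod.ext ?_ ?_ <;> funext e <;> simp <;> ring

lemma finrank_fun_set (s : Set (Sym2 (Fin n))) :
    Module.finrank ℂ (↥s → ℂ) = s.ncard := by
  rw [Module.finrank_pi, ← Nat.card_eq_fintype_card, Nat.card_coe_set_eq]

lemma finrank_fun_set' (s : Set (Fin n)) :
    Module.finrank ℂ (↥s → ℂ) = s.ncard := by
  rw [Module.finrank_pi, ← Nat.card_eq_fintype_card, Nat.card_coe_set_eq]

lemma ker_finrank_ge {V : Type*} [AddCommGroup V] [Module ℂ V] [FiniteDimensional ℂ V]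
    (φ : EuclideanSpace ℂ (Fin n) →ₗ[ℂ] V) :
    n ≤ Module.finrank ℂ V + Module.finrank ℂ (LinearMap.ker φ) := by
  have h1 := LinearMap.finrank_range_add_finrank_ker φ
  have h2 : Module.finrank ℂ (LinearMap.range φ) ≤ Module.finrank ℂ V :=
    Submodule.finrank_le _
  have h3 : Module.finrank ℂ (EuclideanSpace ℂ (Fin n)) = n := by
    simp [finrank_euclideanSpace]
  omega

end Subspaces

/-- For a tree `T` on `n` vertices with matching number `μ(T)`,
`λ_{μ(T)+1}(Δ^T) ≤ 2 ≤ λ_{n-μ(T)+1}(Δ^T)` for the combinatorial Laplacian. -/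
theorem tree_matching_eigenvalue_bounds {n : ℕ} (T : SimpleGraph (Fin n)) (hT : T.IsTree) :
    lamb (magLap_isHermitian T (fun _ _ => (0 : ℝ)) (fun _ _ => neg_zero.symm)) (matchingNumber T + 1) ≤ ((2 : ℝ) : EReal) ∧
    ((2 : ℝ) : EReal) ≤
      lamb (magLap_isHermitian T (fun _ _ => (0 : ℝ)) (fun _ _ => neg_zero.symm)) (n - matchingNumber T + 1) := by
  classical
  set hA := magLap_isHermitian T (fun _ _ => (0 : ℝ)) (fun _ _ => neg_zero.symm) with hAdef
  set μ := matchingNumber T with hμdef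
  -- a maximum matching exists
  have hmem : μ ∈ {k : ℕ | ∃ M : T.Subgraph, M.IsMatching ∧ M.edgeSet.ncard = k} := by
    rw [hμdef, matchingNumber]
    apply Nat.sSup_mem
    · refine ⟨0, ⊥, fun v hv => ?_, by simp⟩
      simp [SimpleGraph.Subgraph.verts_bot] at hv
    · refine ⟨Fintype.card (Sym2 (Fin n)), fun k hk => ?_⟩
      obtain ⟨M, hM, rfl⟩ := hk
      calc M.edgeSet.ncard ≤ (Set.univ : Set (Sym2 (Fin n))).ncard :=
            Set.ncard_le_ncard (Set.subset_univ _) Set.finite_univ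
        _ = Fintype.card (Sym2 (Fin n)) := by
            rw [Set.ncard_univ, Nat.card_eq_fintype_card]
  obtain ⟨M, hM, hMcard⟩ := hmem
  have hn1 : 1 ≤ n := by
    have h := hT.isConnected.nonempty
    exact Fin.pos_iff_nonempty.mpr h
  have hverts_le : M.verts.ncard ≤ n := by
    calc M.verts.ncard ≤ (Set.univ : Set (Fin n)).ncard :=
          Set.ncard_le_ncard (Set.subset_univ _) Set.finite_univ
      _ = n := by rw [Set.ncard_univ, Nat.card_eq_fintype_card, Fintype.card_fin]
  have h2μ : 2 * μ ≤ n := by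
    have := matching_two_mul_card hM
    omega
  have hMsub : M.edgeSet ⊆ T.edgeSet := SimpleGraph.Subgraph.edgeSet_subset M
  have hTedge : T.edgeSet.ncard + 1 = n := by
    have h := hT.card_edgeFinset
    rwa [SimpleGraph.edgeFinset, ← Set.ncard_eq_toFinset_card', Fintype.card_fin] at h
  have hMedge_le : M.edgeSet.ncard ≤ T.edgeSet.ncard := Set.ncard_le_ncard hMsub (Set.toFinite _)
  have hμn : μ + 1 ≤ n := by omega
  constructor
  · -- λ_{μ+1} ≤ 2
    rw [lamb, dif_pos ⟨Nat.le_add_left 1 μ, hμn⟩, EReal.coe_le_coe_iff]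
    set W1 : Submodule ℂ (EuclideanSpace ℂ (Fin n)) :=
      LinearMap.ker ((psi1 T M).comp
        (WithLp.linearEquiv 2 ℂ (∀ _ : Fin n, ℂ)).toLinearMap) with hW1def
    have hW1rank : μ + 1 ≤ Module.finrank ℂ W1 := by
      have h1 := ker_finrank_ge ((psi1 T M).comp
        (WithLp.linearEquiv 2 ℂ (∀ _ : Fin n, ℂ)).toLinearMap)
      rw [finrank_fun_set, ← hW1def] at h1
      have h2 : (T.edgeSet \ M.edgeSet).ncard = T.edgeSet.ncard - M.edgeSet.ncard :=
        Set.ncard_diff hMsub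
      omega
    refine eig_le_of_subspace hA ⟨μ + 1 - 1, by omega⟩ 2 W1 (by simpa using hW1rank) ?_
    intro x hx
    have hker : ∀ e : ↥(T.edgeSet \ M.edgeSet),
        (⇑x) ((e : Sym2 (Fin n)).out.1) - (⇑x) ((e : Sym2 (Fin n)).out.2) = 0 := by
      intro e
      have := congrFun (LinearMap.mem_ker.mp hx) e
      simpa [psi1] using this
    have hxprop : ∀ u v, T.Adj u v → ¬ M.Adj u v → (⇑x) u = (⇑x) v := by
      intro u v hadj hm
      have he : s(u, v) ∈ T.edgeSet \ M.edgeSet :=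
        ⟨T.mem_edgeSet.mpr hadj, fun h => hm (SimpleGraph.Subgraph.mem_edgeSet.mp h)⟩
      have h0 := hker ⟨s(u, v), he⟩
      have houtmk : s((s(u,v) : Sym2 (Fin n)).out.1, (s(u,v) : Sym2 (Fin n)).out.2) = s(u, v) :=
        out_mk_eq _
      rw [Sym2.eq_iff] at houtmk
      rcases houtmk with ⟨h1, h2⟩ | ⟨h1, h2⟩
      · rw [h1, h2] at h0; exact sub_eq_zero.mp h0
      · rw [h1, h2] at h0; exact (sub_eq_zero.mp h0).symm
    have hquad := quad_le_of_matching hM (⇑x) hxprop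
    have hident := quad_form_eq T (⇑x)
    have : 2 * (star ⇑x ⬝ᵥ (magLap T (fun _ _ => (0:ℝ)) *ᵥ ⇑x)).re ≤ 4 * ∑ u, ‖x u‖ ^ 2 := by
      rw [hident]; exact hquad
    linarith
  · -- 2 ≤ λ_{n-μ+1}
    by_cases hμ0 : μ = 0
    · rw [lamb, dif_neg (by omega), if_neg (by omega)]
      exact le_top
    · rw [lamb, dif_pos ⟨by omega, by omega⟩, EReal.coe_le_coe_iff]
      set W2 : Submodule ℂ (EuclideanSpace ℂ (Fin n)) :=
        LinearMap.ker ((psi2 T M).comp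
          (WithLp.linearEquiv 2 ℂ (∀ _ : Fin n, ℂ)).toLinearMap) with hW2def
      have hW2rank : μ ≤ Module.finrank ℂ W2 := by
        have h1 := ker_finrank_ge ((psi2 T M).comp
          (WithLp.linearEquiv 2 ℂ (∀ _ : Fin n, ℂ)).toLinearMap)
        have h2 : Module.finrank ℂ ((↥(M.vertsᶜ) → ℂ) × (↥M.edgeSet → ℂ)) =
            (M.vertsᶜ : Set (Fin n)).ncard + M.edgeSet.ncard := by
          rw [Module.finrank_prod, finrank_fun_set', finrank_fun_set]
        rw [h2, ← hW2def] at h1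
        have h3 := Set.ncard_add_ncard_compl M.verts
        rw [Nat.card_eq_fintype_card, Fintype.card_fin] at h3
        have h4 := matching_two_mul_card hM
        omega
      refine eig_ge_of_subspace hA ⟨n - μ + 1 - 1, by omega⟩ 2 W2 (by
        show n - (n - μ + 1 - 1) ≤ _
        have hc : n - (n - μ + 1 - 1) = μ := by omega
        rw [hc]; exact hW2rank) ?_
      intro x hx
      have hker1 : ∀ v : ↥(M.vertsᶜ), (⇑x) v.val = 0 := by
        intro v
        have := congrFun (congrArg Prod.fst (LinearMap.mem_ker.mp hx)) v
        simpa [psi2] using this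
      have hker2 : ∀ e : ↥M.edgeSet,
          (⇑x) ((e : Sym2 (Fin n)).out.1) + (⇑x) ((e : Sym2 (Fin n)).out.2) = 0 := by
        intro e
        have := congrFun (congrArg Prod.snd (LinearMap.mem_ker.mp hx)) e
        simpa [psi2] using this
      have hx0 : ∀ v, v ∉ M.verts → (⇑x) v = 0 := fun v hv => hker1 ⟨v, hv⟩
      have hx2 : ∀ u v, M.Adj u v → (⇑x) u = - (⇑x) v := by
        intro u v hm
        have he : s(u, v) ∈ M.edgeSet := SimpleGraph.Subgraph.mem_edgeSet.mpr hm
        have h0 := hker2 ⟨s(u, v), he⟩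
        have houtmk : s((s(u,v) : Sym2 (Fin n)).out.1, (s(u,v) : Sym2 (Fin n)).out.2) = s(u, v) :=
          out_mk_eq _
        rw [Sym2.eq_iff] at houtmk
        rcases houtmk with ⟨h1, h2⟩ | ⟨h1, h2⟩
        · rw [h1, h2] at h0; linear_combination h0
        · rw [h1, h2] at h0; linear_combination h0
      have hquad := quad_ge_of_matching hM (⇑x) hx0 hx2
      have hident := quad_form_eq T (⇑x)
      have : 4 * ∑ u, ‖x u‖ ^ 2 ≤ 2 * (star ⇑x ⬝ᵥ (magLap T (fun _ _ => (0:ℝ)) *ᵥ ⇑x)).re := by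
        rw [hident]; exact hquad
      linarith
end

section
/- Let T be a tree on n vertices that has a perfect matching. Then n is even and λ_{n/2}(Δ^T) < 2 < λ_{n/2+2}(Δ^T), where Δ^T is the combinatorial Laplacian of T. -/
section Helpers
open Finset SimpleGraph


private lemma card_filter_comp_perm {N : ℕ} (σ : Equiv.Perm (Fin N)) (P : Fin N → Prop)
    [DecidablePred P] :
    (univ.filter (fun j => P (σ j))).card = (univ.filter P).card := by
  rw [Finset.card_filter, Finset.card_filter]
  exact Equiv.sum_comp σ (fun i => if P i then 1 else 0)

private lemma card_filter_lt_val {N t : ℕ} :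
    (univ.filter (fun j : Fin N => (j : ℕ) < t)).card ≤ t := by
  classical
  have : (univ.filter (fun j : Fin N => (j : ℕ) < t)).card ≤ (Finset.range t).card := by
    refine Finset.card_le_card_of_injOn (fun j => (j : ℕ)) ?_ ?_
    · intro j hj; simp at hj; simpa using hj
    · intro a _ b _ h; exact Fin.val_injective h
  simpa using this

private lemma card_filter_gt_val {N t : ℕ} :
    (univ.filter (fun j : Fin N => t < (j : ℕ))).card ≤ N - t - 1 := by
  classical
  have : (univ.filter (fun j : Fin N => t < (j : ℕ))).card ≤ (Finset.range (N - t - 1)).card := by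
    refine Finset.card_le_card_of_injOn (fun j => (j : ℕ) - t - 1) ?_ ?_
    · intro j hj
      simp at hj
      have hlt := j.isLt
      show (j : ℕ) - t - 1 ∈ Finset.range (N - t - 1)
      rw [Finset.mem_range]
      omega
    · intro a ha b hb h
      simp only [Finset.coe_filter, Set.mem_setOf_eq] at ha hb
      apply Fin.val_injective
      simp only at h
      omega
  simpa using this

private lemma sorted_lt_of_count {N : ℕ} (f : Fin N → ℝ) (c : ℝ) (k : ℕ) (h1 : 1 ≤ k) (h2 : k ≤ N)
    (hcount : k ≤ (univ.filter (fun i => f i < c)).card) :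
    (f ∘ Tuple.sort f) ⟨k - 1, by omega⟩ < c := by
  by_contra hcon
  push_neg at hcon
  have hmono := Tuple.monotone_sort f
  have hsub : univ.filter (fun j => f (Tuple.sort f j) < c) ⊆
      univ.filter (fun j : Fin N => (j : ℕ) < k - 1) := by
    intro j hj
    simp only [mem_filter, mem_univ, true_and] at hj ⊢
    by_contra hge
    push_neg at hge
    have hle : (⟨k - 1, by omega⟩ : Fin N) ≤ j := by simpa [Fin.le_def] using hge
    exact hj.not_ge (hcon.trans (hmono hle))
  have h3 := Finset.card_le_card hsub
  have h4 := card_filter_lt_val (N := N) (t := k - 1)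
  have h5 := card_filter_comp_perm (Tuple.sort f) (fun i => f i < c)
  omega

private lemma sorted_gt_of_count {N : ℕ} (f : Fin N → ℝ) (c : ℝ) (k : ℕ) (h1 : 1 ≤ k) (h2 : k ≤ N)
    (hcount : N - k + 1 ≤ (univ.filter (fun i => c < f i)).card) :
    c < (f ∘ Tuple.sort f) ⟨k - 1, by omega⟩ := by
  by_contra hcon
  push_neg at hcon
  have hmono := Tuple.monotone_sort f
  have hsub : univ.filter (fun j => c < f (Tuple.sort f j)) ⊆
      univ.filter (fun j : Fin N => (k - 1 : ℕ) < (j : ℕ)) := by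
    intro j hj
    simp only [mem_filter, mem_univ, true_and] at hj ⊢
    by_contra hge
    push_neg at hge
    have hle : j ≤ (⟨k - 1, by omega⟩ : Fin N) := by simpa [Fin.le_def] using hge
    exact hj.not_ge ((hmono hle).trans hcon)
  have h3 := Finset.card_le_card hsub
  have h4 := card_filter_gt_val (N := N) (t := k - 1)
  have h5 := card_filter_comp_perm (Tuple.sort f) (fun i => c < f i)
  omega


private lemma dot_self_re {N : ℕ} (x : Fin N → ℂ) :
    (dotProduct (star x) x).re = ∑ i, Complex.normSq (x i) := by
  unfold dotProduct
  rw [Complex.re_sum]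
  apply Finset.sum_congr rfl
  intro i _
  simp [Complex.normSq_apply, Complex.mul_re]

private lemma count_lt_of_neg_subspace {N : ℕ} {A : Matrix (Fin N) (Fin N) ℂ} (hA : A.IsHermitian)
    (r : ℝ) (W : Submodule ℂ (Fin N → ℂ))
    (hW : ∀ x ∈ W, x ≠ 0 → (dotProduct (star x) (A.mulVec x)).re < r * ∑ i, Complex.normSq (x i)) :
    Module.finrank ℂ W ≤ (univ.filter (fun i => hA.eigenvalues i < r)).card := by
  classical
  set S : Finset (Fin N) := univ.filter (fun i => ¬ hA.eigenvalues i < r) with hS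
  set o := hA.eigenvectorBasis with ho
  set fam : S → (Fin N → ℂ) := fun j => (WithLp.equiv 2 _) (o (j : Fin N)) with hfam
  have honS : Orthonormal ℂ (fun j : S => o (j : Fin N)) :=
    o.orthonormal.comp _ Subtype.val_injective
  set U : Submodule ℂ (Fin N → ℂ) := Submodule.span ℂ (Set.range fam) with hU
  -- key estimate on U
  have hUkey : ∀ x ∈ U, r * ∑ i, Complex.normSq (x i) ≤ (dotProduct (star x) (A.mulVec x)).re := by
    intro x hx
    rw [hU, Submodule.mem_span_range_iff_exists_fun] at hx
    obtain ⟨co, hco⟩ := hx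
    set X : EuclideanSpace ℂ (Fin N) := ∑ j : S, co j • o (j : Fin N) with hX
    have hXx : (WithLp.equiv 2 _) X = x := by rw [← hco, hX]; simp [hfam]
    set Y : EuclideanSpace ℂ (Fin N) := ∑ j : S, (co j * (hA.eigenvalues (j : Fin N) : ℂ)) • o (j : Fin N) with hY
    have hAx : A.mulVec x = (WithLp.equiv 2 _) Y := by
      rw [← hco]
      have : A.mulVec (∑ j : S, co j • fam j) = ∑ j : S, co j • A.mulVec (fam j) := by
        rw [← Matrix.mulVecLin_apply, map_sum]
        simp [Matrix.mulVecLin_apply, Matrix.mulVec_smul]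
      rw [this]
      have : ∀ j : S, co j • A.mulVec (fam j)
          = (co j * (hA.eigenvalues (j : Fin N) : ℂ)) • fam j := by
        intro j
        rw [hfam]
        simp only [WithLp.equiv_apply, ho]
        rw [hA.mulVec_eigenvectorBasis (j : Fin N)]
        funext i
        simp [Pi.smul_apply, Complex.real_smul]
        ring
      rw [Finset.sum_congr rfl (fun j _ => this j)]
      rw [hY]; simp [hfam]
    have hdot : dotProduct (star x) (A.mulVec x) = inner ℂ X Y := by
      rw [hAx, ← hXx, PiLp.inner_apply]
      simp [dotProduct, RCLike.inner_apply, mul_comm]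
    have hdotself : dotProduct (star x) x = inner ℂ X X := by
      rw [← hXx, PiLp.inner_apply]; simp [dotProduct, RCLike.inner_apply, mul_comm, Complex.mul_conj']
    have hinnerXY : (inner ℂ X Y : ℂ) = ∑ j : S, (starRingEnd ℂ) (co j) * (co j * (hA.eigenvalues (j:Fin N) : ℂ)) := by
      rw [hX, hY]
      exact honS.inner_sum co (fun j => co j * (hA.eigenvalues (j : Fin N) : ℂ)) univ
      -- maybe needs adjusting: inner_sum is over Finset s
    have hinnerXX : (inner ℂ X X : ℂ) = ∑ j : S, (starRingEnd ℂ) (co j) * co j := by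
      rw [hX]
      exact honS.inner_sum co co univ
    have hnormx : ∑ i, Complex.normSq (x i) = ∑ j : S, Complex.normSq (co j) := by
      rw [← dot_self_re x, hdotself, hinnerXX]
      rw [Complex.re_sum]
      apply Finset.sum_congr rfl
      intro j _
      rw [mul_comm, Complex.mul_conj]
      simp
    rw [hdot, hinnerXY, hnormx, Complex.re_sum, Finset.mul_sum]
    apply Finset.sum_le_sum
    intro j _
    have hj : r ≤ hA.eigenvalues (j : Fin N) := by
      have h2 := Finset.mem_filter.mp j.2
      exact not_lt.mp h2.2
    have : ((starRingEnd ℂ) (co j) * (co j * (hA.eigenvalues (j:Fin N) : ℂ))).re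
        = Complex.normSq (co j) * hA.eigenvalues (j : Fin N) := by
      rw [← mul_assoc, mul_comm ((starRingEnd ℂ) (co j)) (co j), Complex.mul_conj]
      norm_cast
    rw [this]
    calc r * Complex.normSq (co j) ≤ hA.eigenvalues (j:Fin N) * Complex.normSq (co j) := by
          apply mul_le_mul_of_nonneg_right hj (Complex.normSq_nonneg _)
      _ = Complex.normSq (co j) * hA.eigenvalues (j:Fin N) := mul_comm _ _
  -- W ⊓ U = ⊥
  have hdisj : W ⊓ U = ⊥ := by
    rw [Submodule.eq_bot_iff]
    intro x hx
    by_contra hx0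
    exact absurd (hW x hx.1 hx0) (not_lt.mpr (hUkey x hx.2))
  have hli : LinearIndependent ℂ fam := by
    have := honS.linearIndependent
    exact this.map' (WithLp.linearEquiv 2 ℂ (Fin N → ℂ)).toLinearMap (LinearEquiv.ker _)
  have hrankU : Module.finrank ℂ U = S.card := by
    rw [hU, finrank_span_eq_card hli, Fintype.card_coe]
  have hsum := Submodule.finrank_sup_add_finrank_inf_eq W U
  rw [hdisj] at hsum
  have hle : Module.finrank ℂ (W ⊔ U : Submodule ℂ (Fin N → ℂ)) ≤ N := by
    have := Submodule.finrank_le (W ⊔ U : Submodule ℂ (Fin N → ℂ))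
    simpa using this
  have hcards := Finset.card_filter_add_card_filter_not (s := (univ : Finset (Fin N)))
      (fun i => hA.eigenvalues i < r)
  simp only [finrank_bot, add_zero] at hsum
  rw [hrankU] at hsum
  have hS' : S.card = (univ.filter (fun i => ¬ hA.eigenvalues i < r)).card := by rw [hS]
  have : (univ : Finset (Fin N)).card = N := by simp
  omega

private lemma count_gt_of_pos_subspace {N : ℕ} {A : Matrix (Fin N) (Fin N) ℂ} (hA : A.IsHermitian)
    (r : ℝ) (W : Submodule ℂ (Fin N → ℂ))
    (hW : ∀ x ∈ W, x ≠ 0 → (dotProduct (star x) (A.mulVec x)).re > r * ∑ i, Complex.normSq (x i)) :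
    Module.finrank ℂ W ≤ (univ.filter (fun i => r < hA.eigenvalues i)).card := by
  classical
  set S : Finset (Fin N) := univ.filter (fun i => ¬ r < hA.eigenvalues i) with hS
  set o := hA.eigenvectorBasis with ho
  set fam : S → (Fin N → ℂ) := fun j => (WithLp.equiv 2 _) (o (j : Fin N)) with hfam
  have honS : Orthonormal ℂ (fun j : S => o (j : Fin N)) :=
    o.orthonormal.comp _ Subtype.val_injective
  set U : Submodule ℂ (Fin N → ℂ) := Submodule.span ℂ (Set.range fam) with hU
  -- key estimate on U
  have hUkey : ∀ x ∈ U, (dotProduct (star x) (A.mulVec x)).re ≤ r * ∑ i, Complex.normSq (x i) := by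
    intro x hx
    rw [hU, Submodule.mem_span_range_iff_exists_fun] at hx
    obtain ⟨co, hco⟩ := hx
    set X : EuclideanSpace ℂ (Fin N) := ∑ j : S, co j • o (j : Fin N) with hX
    have hXx : (WithLp.equiv 2 _) X = x := by rw [← hco, hX]; simp [hfam]
    set Y : EuclideanSpace ℂ (Fin N) := ∑ j : S, (co j * (hA.eigenvalues (j : Fin N) : ℂ)) • o (j : Fin N) with hY
    have hAx : A.mulVec x = (WithLp.equiv 2 _) Y := by
      rw [← hco]
      have : A.mulVec (∑ j : S, co j • fam j) = ∑ j : S, co j • A.mulVec (fam j) := by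
        rw [← Matrix.mulVecLin_apply, map_sum]
        simp [Matrix.mulVecLin_apply, Matrix.mulVec_smul]
      rw [this]
      have : ∀ j : S, co j • A.mulVec (fam j)
          = (co j * (hA.eigenvalues (j : Fin N) : ℂ)) • fam j := by
        intro j
        rw [hfam]
        simp only [WithLp.equiv_apply, ho]
        rw [hA.mulVec_eigenvectorBasis (j : Fin N)]
        funext i
        simp [Pi.smul_apply, Complex.real_smul]
        ring
      rw [Finset.sum_congr rfl (fun j _ => this j)]
      rw [hY]; simp [hfam]
    have hdot : dotProduct (star x) (A.mulVec x) = inner ℂ X Y := by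
      rw [hAx, ← hXx, PiLp.inner_apply]
      simp [dotProduct, RCLike.inner_apply, mul_comm]
    have hdotself : dotProduct (star x) x = inner ℂ X X := by
      rw [← hXx, PiLp.inner_apply]; simp [dotProduct, RCLike.inner_apply, mul_comm, Complex.mul_conj']
    have hinnerXY : (inner ℂ X Y : ℂ) = ∑ j : S, (starRingEnd ℂ) (co j) * (co j * (hA.eigenvalues (j:Fin N) : ℂ)) := by
      rw [hX, hY]
      exact honS.inner_sum co (fun j => co j * (hA.eigenvalues (j : Fin N) : ℂ)) univ
      -- maybe needs adjusting: inner_sum is over Finset s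
    have hinnerXX : (inner ℂ X X : ℂ) = ∑ j : S, (starRingEnd ℂ) (co j) * co j := by
      rw [hX]
      exact honS.inner_sum co co univ
    have hnormx : ∑ i, Complex.normSq (x i) = ∑ j : S, Complex.normSq (co j) := by
      rw [← dot_self_re x, hdotself, hinnerXX]
      rw [Complex.re_sum]
      apply Finset.sum_congr rfl
      intro j _
      rw [mul_comm, Complex.mul_conj]
      simp
    rw [hdot, hinnerXY, hnormx, Complex.re_sum, Finset.mul_sum]
    apply Finset.sum_le_sum
    intro j _
    have hj : hA.eigenvalues (j : Fin N) ≤ r := by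
      have h2 := Finset.mem_filter.mp j.2
      exact not_lt.mp h2.2
    have heq : ((starRingEnd ℂ) (co j) * (co j * (hA.eigenvalues (j:Fin N) : ℂ))).re
        = Complex.normSq (co j) * hA.eigenvalues (j : Fin N) := by
      rw [← mul_assoc, mul_comm ((starRingEnd ℂ) (co j)) (co j), Complex.mul_conj]
      norm_cast
    rw [heq]
    calc Complex.normSq (co j) * hA.eigenvalues (j:Fin N)
        = hA.eigenvalues (j:Fin N) * Complex.normSq (co j) := mul_comm _ _
      _ ≤ r * Complex.normSq (co j) := by
          apply mul_le_mul_of_nonneg_right hj (Complex.normSq_nonneg _)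
  -- W ⊓ U = ⊥
  have hdisj : W ⊓ U = ⊥ := by
    rw [Submodule.eq_bot_iff]
    intro x hx
    by_contra hx0
    exact absurd (hW x hx.1 hx0) (not_lt.mpr (hUkey x hx.2))
  have hli : LinearIndependent ℂ fam := by
    have := honS.linearIndependent
    exact this.map' (WithLp.linearEquiv 2 ℂ (Fin N → ℂ)).toLinearMap (LinearEquiv.ker _)
  have hrankU : Module.finrank ℂ U = S.card := by
    rw [hU, finrank_span_eq_card hli, Fintype.card_coe]
  have hsum := Submodule.finrank_sup_add_finrank_inf_eq W U
  rw [hdisj] at hsum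
  have hle : Module.finrank ℂ (W ⊔ U : Submodule ℂ (Fin N → ℂ)) ≤ N := by
    have := Submodule.finrank_le (W ⊔ U : Submodule ℂ (Fin N → ℂ))
    simpa using this
  have hcards := Finset.card_filter_add_card_filter_not (s := (univ : Finset (Fin N)))
      (fun i => r < hA.eigenvalues i)
  simp only [finrank_bot, add_zero] at hsum
  rw [hrankU] at hsum
  have hS' : S.card = (univ.filter (fun i => ¬ r < hA.eigenvalues i)).card := by rw [hS]
  have : (univ : Finset (Fin N)).card = N := by simp
  omega

variable {n : ℕ}

private def indG (T : SimpleGraph (Fin n)) (s : Finset (Fin n)) : SimpleGraph (Fin n) where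
  Adj a b := a ∈ s ∧ b ∈ s ∧ T.Adj a b
  symm := ⟨fun a b ⟨ha, hb, h⟩ => ⟨hb, ha, h.symm⟩⟩
  loopless := ⟨fun a ⟨_, _, h⟩ => T.irrefl h⟩

private lemma indG_le (T : SimpleGraph (Fin n)) (s : Finset (Fin n)) : indG T s ≤ T := by
  intro a b h
  exact h.2.2

private lemma path_eq_singleton {T : SimpleGraph (Fin n)} (hac : T.IsAcyclic)
    {x y : Fin n} (p : T.Walk x y) (hp : p.IsPath) (hxy : T.Adj x y) :
    p = SimpleGraph.Walk.cons hxy SimpleGraph.Walk.nil := by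
  have := SimpleGraph.isAcyclic_iff_path_unique.mp hac ⟨p, hp⟩ (SimpleGraph.Path.singleton hxy)
  have h2 := congrArg Subtype.val this
  simpa [SimpleGraph.Path.singleton] using h2

private lemma support_two {T : SimpleGraph (Fin n)} (hac : T.IsAcyclic) {s : Finset (Fin n)}
    {a b c : Fin n} (w : (indG T s).Walk a b) (hw : w.IsPath)
    (hc : c ∈ w.support) (hadj : T.Adj a c) :
    (w.takeUntil c hc).support = [a, c] := by
  have hq : (w.takeUntil c hc).IsPath := hw.takeUntil hc
  have hmap := path_eq_singleton hac ((w.takeUntil c hc).mapLe (indG_le T s)) (hq.mapLe _) hadj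
  have hsup := congrArg SimpleGraph.Walk.support hmap
  rw [SimpleGraph.Walk.mapLe] at hsup
  rw [SimpleGraph.Walk.support_map] at hsup
  rw [show (⇑(SimpleGraph.Hom.ofLE (indG_le T s))) = id from rfl, List.map_id] at hsup
  exact hsup

private lemma eq_snd_of_adj {T : SimpleGraph (Fin n)} (hac : T.IsAcyclic) {s : Finset (Fin n)}
    {a b c v : Fin n} (h1 : (indG T s).Adj a v) (q : (indG T s).Walk v b)
    (hw : (SimpleGraph.Walk.cons h1 q).IsPath)
    (hc : c ∈ (SimpleGraph.Walk.cons h1 q).support)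
    (hadj : T.Adj a c) : c = v := by
  have h2 := support_two hac (SimpleGraph.Walk.cons h1 q) hw hc hadj
  have h3 := ((SimpleGraph.Walk.cons h1 q).take_spec hc).symm
  have h4 := congrArg SimpleGraph.Walk.support h3
  rw [SimpleGraph.Walk.support_append, h2] at h4
  rw [SimpleGraph.Walk.support_cons, q.support_eq_cons] at h4
  simp only [List.cons_append, List.nil_append, List.cons.injEq] at h4
  exact h4.2.1.symm

private lemma leafPair (T : SimpleGraph (Fin n)) (hac : T.IsAcyclic) (μ : Fin n → Fin n)
    (hμT : ∀ v, T.Adj v (μ v)) (hμμ : ∀ v, μ (μ v) = v)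
    (s : Finset (Fin n)) (hcl : ∀ v ∈ s, μ v ∈ s) (hne : s.Nonempty) :
    ∃ u v p : Fin n, u ∈ s ∧ v ∈ s ∧ v = μ u ∧ p ∈ s ∧ p ≠ v ∧
      (∀ w ∈ s, T.Adj u w → w = v) ∧ (∀ w ∈ s, T.Adj v w → w = u ∨ w = p) ∧
      (p = u ∨ T.Adj v p) := by
  classical
  set G := indG T s with hG
  set P : Set ℕ := {ℓ | ∃ a b : Fin n, ∃ w : G.Walk a b, w.IsPath ∧ w.length = ℓ} with hP
  obtain ⟨u₀, hu₀⟩ := hne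
  have h1P : 1 ∈ P := by
    refine ⟨u₀, μ u₀, SimpleGraph.Walk.cons (show G.Adj u₀ (μ u₀) from ⟨hu₀, hcl _ hu₀, hμT u₀⟩) SimpleGraph.Walk.nil, ?_, rfl⟩
    rw [SimpleGraph.Walk.cons_isPath_iff]
    refine ⟨SimpleGraph.Walk.IsPath.nil, ?_⟩
    simp only [SimpleGraph.Walk.support_nil, List.mem_singleton]
    exact (hμT u₀).ne
  have hbdd : BddAbove P := by
    refine ⟨n, ?_⟩
    rintro ℓ ⟨a, b, w, hw, hl⟩
    have := hw.length_lt
    rw [Fintype.card_fin] at this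
    omega
  set L := sSup P with hL
  have hLmem : L ∈ P := Nat.sSup_mem ⟨1, h1P⟩ hbdd
  have hL1 : 1 ≤ L := le_csSup hbdd h1P
  have hmax : ∀ {a' b' : Fin n} (w' : G.Walk a' b'), w'.IsPath → w'.length ≤ L := by
    intro a' b' w' h'
    exact le_csSup hbdd ⟨a', b', w', h', rfl⟩
  obtain ⟨a, b, w, hw, hlen⟩ := hLmem
  cases w with
  | nil => simp at hlen; omega
  | @cons _ v _ h1 q =>
    rw [SimpleGraph.Walk.cons_isPath_iff] at hw
    obtain ⟨hq, haq⟩ := hw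
    have hwpath : (SimpleGraph.Walk.cons h1 q).IsPath :=
      SimpleGraph.Walk.IsPath.cons hq haq
    have has : a ∈ s := h1.1
    have hvs : v ∈ s := h1.2.1
    rw [SimpleGraph.Walk.length_cons] at hlen
    -- Claim A : all T-neighbours of a within s equal v
    have claimA : ∀ c ∈ s, T.Adj a c → c = v := by
      intro c hcs hadj
      by_cases hcsup : c ∈ (SimpleGraph.Walk.cons h1 q).support
      · exact eq_snd_of_adj hac h1 q hwpath hcsup hadj
      · exfalso
        have hGa : G.Adj c a := ⟨hcs, has, hadj.symm⟩
        have hpath2 : (SimpleGraph.Walk.cons hGa (SimpleGraph.Walk.cons h1 q)).IsPath :=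
          SimpleGraph.Walk.IsPath.cons hwpath hcsup
        have := hmax _ hpath2
        rw [SimpleGraph.Walk.length_cons, SimpleGraph.Walk.length_cons] at this
        omega
    have hμa : μ a = v := claimA (μ a) (hcl a has) (hμT a)
    have haμv : a = μ v := by rw [← hμa, hμμ]
    cases q with
    | nil =>
      -- b has no neighbours in s besides a (here the walk is a single edge a-b)
      refine ⟨a, b, a, has, hvs, hμa.symm, has, (h1.2.2).ne, claimA, ?_, Or.inl rfl⟩
      intro c hcs hadj
      left
      by_cases hcsup : c ∈ (SimpleGraph.Walk.cons h1 SimpleGraph.Walk.nil).support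
      · simp only [SimpleGraph.Walk.support_cons, SimpleGraph.Walk.support_nil,
          List.mem_cons, List.mem_singleton] at hcsup
        rcases hcsup with h | h | h
        · exact h
        · exact absurd h hadj.ne'
        · simp at h
      · exfalso
        simp only [SimpleGraph.Walk.support_cons, SimpleGraph.Walk.support_nil,
          List.mem_cons, List.mem_singleton, List.not_mem_nil, or_false, not_or] at hcsup
        obtain ⟨hca, hcv⟩ := hcsup
        have hcb : c ≠ b := by
          intro h
          exact hcv (by simp [h])
        -- every G-neighbour of c is b
        have hnbr : ∀ y, G.Adj c y → y = b := by
          intro y hy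
          by_contra hyv
          have hGcv : G.Adj c b := ⟨hcs, hvs, hadj.symm⟩
          have hGyc : G.Adj y c := hy.symm
          have hpath3 : (SimpleGraph.Walk.cons hGyc
              (SimpleGraph.Walk.cons hGcv SimpleGraph.Walk.nil)).IsPath := by
            rw [SimpleGraph.Walk.cons_isPath_iff, SimpleGraph.Walk.cons_isPath_iff]
            refine ⟨⟨SimpleGraph.Walk.IsPath.nil, ?_⟩, ?_⟩
            · simp only [SimpleGraph.Walk.support_nil, List.mem_singleton]
              exact hcb
            · simp only [SimpleGraph.Walk.support_cons, SimpleGraph.Walk.support_nil,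
                List.mem_cons, List.mem_singleton, List.not_mem_nil, or_false, not_or]
              exact ⟨hy.ne', hyv⟩
          have := hmax _ hpath3
          simp only [SimpleGraph.Walk.length_cons, SimpleGraph.Walk.length_nil] at this hlen
          omega
        have h5 : μ c = b := hnbr (μ c) ⟨hcs, hcl c hcs, hμT c⟩
        have : c = μ b := by rw [← h5, hμμ]
        rw [← haμv] at this
        exact hca this
    | @cons _ p₂ _ h2 q2 =>
      rw [SimpleGraph.Walk.cons_isPath_iff] at hq
      obtain ⟨hq2, hvq2⟩ := hq
      have hqpath : (SimpleGraph.Walk.cons h2 q2).IsPath :=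
        SimpleGraph.Walk.IsPath.cons hq2 hvq2
      refine ⟨a, v, p₂, has, hvs, hμa.symm, h2.2.1, (h2.2.2).ne', claimA, ?_, Or.inr h2.2.2⟩
      intro c hcs hadj
      by_cases hcq : c ∈ (SimpleGraph.Walk.cons h2 q2).support
      · exact Or.inr (eq_snd_of_adj hac h2 q2 hqpath hcq hadj)
      · by_cases hca : c = a
        · exact Or.inl hca
        · exfalso
          -- c is outside the whole path
          have hnbr : ∀ y, G.Adj c y → y = v := by
            intro y hy
            by_contra hyv
            by_cases hyq : y ∈ (SimpleGraph.Walk.cons h2 q2).support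
            · -- two distinct T-paths from v to y
              have hP1 : (SimpleGraph.Walk.cons hadj
                  (SimpleGraph.Walk.cons hy.2.2 SimpleGraph.Walk.nil) : T.Walk v y).IsPath := by
                rw [SimpleGraph.Walk.cons_isPath_iff, SimpleGraph.Walk.cons_isPath_iff]
                refine ⟨⟨SimpleGraph.Walk.IsPath.nil, ?_⟩, ?_⟩
                · simp only [SimpleGraph.Walk.support_nil, List.mem_singleton]
                  exact hy.2.2.ne
                · simp only [SimpleGraph.Walk.support_cons, SimpleGraph.Walk.support_nil,
                    List.mem_cons, List.mem_singleton, List.not_mem_nil, or_false, not_or]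
                  exact ⟨hadj.ne, fun h => hyv h.symm⟩
              have hP2 : (((SimpleGraph.Walk.cons h2 q2).takeUntil y hyq).mapLe
                  (indG_le T s)).IsPath := (hqpath.takeUntil hyq).mapLe _
              have := SimpleGraph.isAcyclic_iff_path_unique.mp hac
                ⟨_, hP1⟩ ⟨_, hP2⟩
              have hsupeq := congrArg (fun z => SimpleGraph.Walk.support z.val) this
              simp only at hsupeq
              have hcmem : c ∈ (SimpleGraph.Walk.cons hadj
                  (SimpleGraph.Walk.cons hy.2.2 SimpleGraph.Walk.nil) : T.Walk v y).support := by
                simp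
              rw [hsupeq] at hcmem
              rw [SimpleGraph.Walk.mapLe, SimpleGraph.Walk.support_map,
                show (⇑(SimpleGraph.Hom.ofLE (indG_le T s))) = id from rfl,
                List.map_id] at hcmem
              exact hcq (SimpleGraph.Walk.support_takeUntil_subset _ hyq hcmem)
            · -- extend the maximal path
              have hGcv : G.Adj c v := ⟨hcs, hvs, hadj.symm⟩
              have hcsup : c ∉ (SimpleGraph.Walk.cons h2 q2).support := hcq
              have hpath4 : (SimpleGraph.Walk.cons hy.symm
                  (SimpleGraph.Walk.cons hGcv (SimpleGraph.Walk.cons h2 q2))).IsPath := by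
                rw [SimpleGraph.Walk.cons_isPath_iff]
                constructor
                · exact SimpleGraph.Walk.IsPath.cons hqpath hcsup
                · simp only [SimpleGraph.Walk.support_cons, List.mem_cons, not_or]
                  refine ⟨hy.ne', hyv, ?_⟩
                  intro hmem
                  apply hyq
                  rw [SimpleGraph.Walk.support_cons]
                  exact List.mem_cons_of_mem _ hmem
              have := hmax _ hpath4
              simp only [SimpleGraph.Walk.length_cons] at this hlen
              omega
          have h5 : μ c = v := hnbr (μ c) ⟨hcs, hcl c hcs, hμT c⟩
          have : c = μ v := by rw [← h5, hμμ]
          rw [← haμv] at this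
          exact hca this

open Classical in
private noncomputable def qOn (T : SimpleGraph (Fin n)) (s : Finset (Fin n)) (x : Fin n → ℂ) : ℝ :=
  ∑ a ∈ s, ∑ b ∈ s, (if T.Adj a b then Complex.normSq (x a - x b) else 0)

private noncomputable def nOn (s : Finset (Fin n)) (x : Fin n → ℂ) : ℝ :=
  ∑ a ∈ s, Complex.normSq (x a)

private lemma neg_subspace (T : SimpleGraph (Fin n)) (hac : T.IsAcyclic) (μ : Fin n → Fin n)
    (hμT : ∀ v, T.Adj v (μ v)) (hμμ : ∀ v, μ (μ v) = v) :
    ∀ (s : Finset (Fin n)), (∀ v ∈ s, μ v ∈ s) →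
    ∃ W : Submodule ℂ (Fin n → ℂ), 2 * Module.finrank ℂ W = s.card ∧
      (∀ x ∈ W, ∀ w, w ∉ s → x w = 0) ∧
      (∀ x ∈ W, x ≠ 0 → qOn T s x < 4 * nOn s x) := by
  classical
  intro s
  induction s using Finset.strongInduction with
  | _ s IH =>
    intro hcl
    rcases s.eq_empty_or_nonempty with rfl | hne
    · refine ⟨⊥, by simp, ?_, ?_⟩
      · intro x hx w _
        rw [Submodule.mem_bot] at hx
        simp [hx]
      · intro x hx hx0
        rw [Submodule.mem_bot] at hx
        exact absurd hx hx0
    · obtain ⟨u, v, p, hus, hvs, hvμ, hps, hpv, hNu, hNv, hcase⟩ :=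
        leafPair T hac μ hμT hμμ s hcl hne
    -- basic facts
      have huv : u ≠ v := fun h => (hμT u).ne (hvμ ▸ h)
      have hTuv : T.Adj u v := hvμ ▸ hμT u
      set s' : Finset (Fin n) := s \ {u, v} with hs'
      have hsub : s' ⊂ s := by
        refine Finset.ssubset_iff_of_subset (Finset.sdiff_subset) |>.mpr ?_
        exact ⟨u, hus, by simp [hs']⟩
      have hus' : u ∉ s' := by simp [hs']
      have hvs' : v ∉ s' := by simp [hs']
      have hmem_s' : ∀ w, w ∈ s' ↔ (w ∈ s ∧ w ≠ u ∧ w ≠ v) := by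
        intro w
        simp only [hs', Finset.mem_sdiff, Finset.mem_insert, Finset.mem_singleton, not_or]
      have hcl' : ∀ w ∈ s', μ w ∈ s' := by
        intro w hw
        rw [hmem_s'] at hw ⊢
        obtain ⟨hws, hwu, hwv⟩ := hw
        refine ⟨hcl w hws, ?_, ?_⟩
        · intro h
          apply hwv
          rw [← hμμ w, h, ← hvμ]
        · intro h
          apply hwu
          rw [← hμμ w, h, hvμ, hμμ]
      obtain ⟨W', hrank', hsupp', hneg'⟩ := IH s' hsub hcl'
      -- the extension map
      set Φ : (W' × ℂ) →ₗ[ℂ] (Fin n → ℂ) :=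
        (W'.subtype.comp (LinearMap.fst ℂ W' ℂ))
          + (LinearMap.snd ℂ W' ℂ).smulRight (Pi.single u (1 : ℂ) : Fin n → ℂ)
          + ((LinearMap.proj p).comp (W'.subtype.comp (LinearMap.fst ℂ W' ℂ))).smulRight
              (Pi.single v (1 : ℂ) : Fin n → ℂ) with hΦ
      have hΦapply : ∀ (y : W') (t : ℂ),
          Φ (y, t) = (y : Fin n → ℂ) + t • (Pi.single u (1 : ℂ) : Fin n → ℂ)
            + ((y : Fin n → ℂ) p) • (Pi.single v (1 : ℂ) : Fin n → ℂ) := fun y t => rfl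
      -- evaluation facts
      have heval : ∀ (y : W') (t : ℂ) (w : Fin n), w ≠ u → w ≠ v →
          Φ (y, t) w = (y : Fin n → ℂ) w := by
        intro y t w hwu hwv
        rw [hΦapply]
        simp [Pi.single_apply, hwu, hwv]
      have hevalu : ∀ (y : W') (t : ℂ), Φ (y, t) u = (y : Fin n → ℂ) u + t := by
        intro y t
        rw [hΦapply]
        simp [Pi.single_apply, huv, Ne.symm huv]
      have hevalv : ∀ (y : W') (t : ℂ), Φ (y, t) v = (y : Fin n → ℂ) v + (y : Fin n → ℂ) p := by
        intro y t
        rw [hΦapply]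
        simp [Pi.single_apply, huv, Ne.symm huv]
      have hyu0 : ∀ y : W', (y : Fin n → ℂ) u = 0 := fun y => hsupp' y y.2 u hus'
      have hyv0 : ∀ y : W', (y : Fin n → ℂ) v = 0 := fun y => hsupp' y y.2 v hvs'
      have hinj : Function.Injective Φ := by
        rw [← LinearMap.ker_eq_bot, Submodule.eq_bot_iff]
        rintro ⟨y, t⟩ hz
        rw [LinearMap.mem_ker] at hz
        have hy0 : (y : Fin n → ℂ) = 0 := by
          funext w
          by_cases hw : w ∈ s'
          · rw [hmem_s'] at hw
            have := congrFun hz w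
            rw [heval y t w hw.2.1 hw.2.2] at this
            exact this
          · exact hsupp' y y.2 w hw
        have ht0 : t = 0 := by
          have := congrFun hz u
          rw [hevalu] at this
          rw [hy0] at this
          simpa using this
        have : y = 0 := Subtype.ext hy0
        simp [this, ht0]
      refine ⟨LinearMap.range Φ, ?_, ?_, ?_⟩
      · -- rank computation
        have h1 : Module.finrank ℂ (LinearMap.range Φ) = Module.finrank ℂ (W' × ℂ) := by
          have hrn := LinearMap.finrank_range_add_finrank_ker Φ
          rw [LinearMap.ker_eq_bot.mpr hinj, finrank_bot, add_zero] at hrn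
          exact hrn
        have h2 : Module.finrank ℂ (W' × ℂ) = Module.finrank ℂ W' + 1 := by
          rw [Module.finrank_prod, Module.finrank_self]
        have h3 : s.card = s'.card + 2 := by
          have hsubuv : ({u, v} : Finset (Fin n)) ⊆ s := by
            intro w hw
            simp only [Finset.mem_insert, Finset.mem_singleton] at hw
            rcases hw with rfl | rfl
            · exact hus
            · exact hvs
          have hcard_uv : ({u, v} : Finset (Fin n)).card = 2 := by
            rw [Finset.card_insert_of_notMem (by simp [huv]), Finset.card_singleton]
          have h4 := Finset.card_sdiff_of_subset hsubuv
          rw [← hs', hcard_uv] at h4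
          have h5 := Finset.card_le_card hsubuv
          rw [hcard_uv] at h5
          omega
        rw [h1, h2]
        omega
      · -- support
        rintro x ⟨⟨y, t⟩, rfl⟩ w hw
        have hwu : w ≠ u := fun h => hw (h ▸ hus)
        have hwv : w ≠ v := fun h => hw (h ▸ hvs)
        rw [heval y t w hwu hwv]
        exact hsupp' y y.2 w (fun hmem => hw (Finset.sdiff_subset hmem))
      · -- negativity
        rintro x ⟨⟨y, t⟩, rfl⟩ hx0
        classical
        set Y : Fin n → ℂ := (y : Fin n → ℂ) with hY
        set c : ℂ := Y p with hc
        set x : Fin n → ℂ := Φ (y, t) with hx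
        have hxw : ∀ w, w ≠ u → w ≠ v → x w = Y w := fun w h1 h2 => heval y t w h1 h2
        have hxu : x u = t := by rw [hx, hevalu, hyu0]; ring
        have hxv : x v = c := by rw [hx, hevalv, hyv0]; ring
        have hs_ins : s = insert u (insert v s') := by
          ext w
          simp only [Finset.mem_insert, hmem_s']
          constructor
          · intro hw
            by_cases h1 : w = u
            · exact Or.inl h1
            · by_cases h2 : w = v
              · exact Or.inr (Or.inl h2)
              · exact Or.inr (Or.inr ⟨hw, h1, h2⟩)
          · rintro (rfl | rfl | ⟨hw, -, -⟩)
            · exact hus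
            · exact hvs
            · exact hw
        have hunotin : u ∉ insert v s' := by
          simp only [Finset.mem_insert, not_or]
          exact ⟨huv, hus'⟩
        have hsplit : ∀ g : Fin n → ℝ, ∑ a ∈ s, g a = g u + g v + ∑ a ∈ s', g a := by
          intro g
          rw [hs_ins, Finset.sum_insert hunotin, Finset.sum_insert hvs']
          ring
        set F : Fin n → Fin n → ℝ :=
          fun a b => if T.Adj a b then Complex.normSq (x a - x b) else 0 with hF
        have hFuu : F u u = 0 := by simp only [hF]; simp
        have hFvv : F v v = 0 := by simp only [hF]; simp
        have hFuv : F u v = Complex.normSq (t - c) := by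
          simp only [hF]; simp only [if_pos hTuv, hxu, hxv]
        have hFvu : F v u = Complex.normSq (c - t) := by
          simp only [hF]; simp only [if_pos hTuv.symm, hxu, hxv]
        have hFub : ∀ b ∈ s', F u b = 0 := by
          intro b hb
          simp only [hF]
          rw [hmem_s'] at hb
          by_cases hadj : T.Adj u b
          · exact absurd (hNu b hb.1 hadj) hb.2.2
          · simp [hadj]
        have hFbu : ∀ b ∈ s', F b u = 0 := by
          intro b hb
          simp only [hF]
          rw [hmem_s'] at hb
          by_cases hadj : T.Adj b u
          · exact absurd (hNu b hb.1 hadj.symm) hb.2.2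
          · simp [hadj]
        have hFvb : ∀ b ∈ s', F v b = 0 := by
          intro b hb
          simp only [hF]
          have hb' := hb
          rw [hmem_s'] at hb'
          by_cases hadj : T.Adj v b
          · rcases hNv b hb'.1 hadj with rfl | rfl
            · exact absurd rfl hb'.2.1
            · rw [if_pos hadj, hxv, hxw b hb'.2.1 hb'.2.2, ← hc]
              simp
          · simp [hadj]
        have hFbv : ∀ b ∈ s', F b v = 0 := by
          intro b hb
          simp only [hF]
          have hb' := hb
          rw [hmem_s'] at hb'
          by_cases hadj : T.Adj b v
          · rcases hNv b hb'.1 hadj.symm with rfl | rfl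
            · exact absurd rfl hb'.2.1
            · rw [if_pos hadj, hxv, hxw b hb'.2.1 hb'.2.2, ← hc]
              simp
          · simp [hadj]
        have hqs : qOn T s x = qOn T s' Y + (Complex.normSq (t - c) + Complex.normSq (c - t)) := by
          have hq1 : qOn T s x = ∑ a ∈ s, ∑ b ∈ s, F a b := by
            rw [qOn]
          rw [hq1, hsplit (fun a => ∑ b ∈ s, F a b)]
          have hrow : ∀ a, ∑ b ∈ s, F a b = F a u + F a v + ∑ b ∈ s', F a b :=
            fun a => hsplit (fun b => F a b)
          rw [hrow u, hrow v]
          have hru : ∑ b ∈ s', F u b = 0 := Finset.sum_eq_zero hFub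
          have hrv : ∑ b ∈ s', F v b = 0 := Finset.sum_eq_zero hFvb
          have hinner : ∀ a ∈ s', (∑ b ∈ s, F a b) = ∑ b ∈ s', F a b := by
            intro a ha
            rw [hrow a, hFbu a ha, hFbv a ha]
            ring
          rw [Finset.sum_congr rfl hinner]
          have hq2 : ∑ a ∈ s', ∑ b ∈ s', F a b = qOn T s' Y := by
            rw [qOn]
            apply Finset.sum_congr rfl
            intro a ha
            apply Finset.sum_congr rfl
            intro b hb
            simp only [hF]
            rw [hmem_s'] at ha hb
            rw [hxw a ha.2.1 ha.2.2, hxw b hb.2.1 hb.2.2]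
          rw [hq2, hFuu, hFvv, hFuv, hFvu, hru, hrv]
          ring
        have hns : nOn s x = Complex.normSq t + Complex.normSq c + nOn s' Y := by
          rw [nOn, hsplit (fun a => Complex.normSq (x a)), hxu, hxv]
          have : ∑ a ∈ s', Complex.normSq (x a) = nOn s' Y := by
            rw [nOn]
            apply Finset.sum_congr rfl
            intro a ha
            rw [hmem_s'] at ha
            rw [hxw a ha.2.1 ha.2.2]
          rw [this]
        have halg : Complex.normSq (t - c) + Complex.normSq (c - t)
            - 4 * Complex.normSq t - 4 * Complex.normSq c = -2 * Complex.normSq (t + c) := by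
          simp only [Complex.normSq_apply, Complex.sub_re, Complex.sub_im, Complex.add_re,
            Complex.add_im]
          ring
        by_cases hy0 : Y = 0
        · have ht0 : t ≠ 0 := by
            intro h
            apply hx0
            rw [hx, hΦapply, h]
            have : (y : Fin n → ℂ) = 0 := hy0
            rw [this]
            simp
          have hq0 : qOn T s' Y = 0 := by
            rw [qOn]
            apply Finset.sum_eq_zero
            intro a _
            apply Finset.sum_eq_zero
            intro b _
            rw [hy0]
            simp
          have hn0 : nOn s' Y = 0 := by
            rw [nOn]
            apply Finset.sum_eq_zero
            intro a _
            rw [hy0]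
            simp
          have hc0 : c = 0 := by rw [hc, hy0]; rfl
          rw [hqs, hns, hq0, hn0, hc0]
          have hpos := Complex.normSq_pos.mpr ht0
          simp only [sub_zero, zero_sub, add_zero, zero_add, Complex.normSq_neg,
            Complex.normSq_zero]
          linarith
        · have hlt := hneg' Y y.2 hy0
          have hplus := Complex.normSq_nonneg (t + c)
          rw [hqs, hns]
          linarith [hlt, hplus, halg]

open Classical in
private noncomputable def offq (T : SimpleGraph (Fin n)) (μ : Fin n → Fin n) (x : Fin n → ℂ) : ℝ :=
  ∑ a, ∑ b ∈ Finset.univ.erase (μ a), (if T.Adj a b then Complex.normSq (x a - x b) else 0)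

private lemma pos_subspace (T : SimpleGraph (Fin n)) (hconn : T.Connected) (hn : 0 < n)
    (μ : Fin n → Fin n) (hμT : ∀ v, T.Adj v (μ v)) (hμμ : ∀ v, μ (μ v) = v) :
    ∃ W : Submodule ℂ (Fin n → ℂ), n ≤ 2 * (Module.finrank ℂ W + 1) ∧
      (∀ x ∈ W, x ≠ 0 → 4 * nOn Finset.univ x < qOn T Finset.univ x) := by
  classical
  have hμne : ∀ v, μ v ≠ v := fun v => (hμT v).ne'
  have hμinj : Function.Injective μ := Function.Involutive.injective hμμ
  set R : Finset (Fin n) := univ.filter (fun v => v < μ v) with hR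
  -- cardinality of R
  have hcardR : 2 * R.card = n := by
    have himg : R.image μ = univ.filter (fun v => μ v < v) := by
      ext w
      simp only [Finset.mem_image, hR, mem_filter, mem_univ, true_and]
      constructor
      · rintro ⟨r, hr, rfl⟩
        rw [hμμ]
        exact hr
      · intro hw
        refine ⟨μ w, ?_, hμμ w⟩
        rw [hμμ]
        exact hw
    have hdisj : Disjoint R (univ.filter (fun v => μ v < v)) := by
      rw [Finset.disjoint_left]
      intro a ha hb
      rw [hR, mem_filter] at ha
      rw [mem_filter] at hb
      exact absurd (ha.2.trans hb.2) (lt_irrefl a)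
    have hunion : R ∪ univ.filter (fun v => μ v < v) = univ := by
      ext w
      simp only [Finset.mem_union, hR, mem_filter, mem_univ, true_and, iff_true]
      rcases lt_trichotomy w (μ w) with h | h | h
      · exact Or.inl h
      · exact absurd h.symm (hμne w)
      · exact Or.inr h
    have hcardim : (R.image μ).card = R.card := Finset.card_image_of_injective R hμinj
    have := Finset.card_union_of_disjoint hdisj
    rw [hunion, ← himg, hcardim] at this
    simp only [Finset.card_univ, Fintype.card_fin] at this
    omega
  -- the spanning family
  set fam : {r // r ∈ R} → (Fin n → ℂ) :=
    fun r => Pi.single r.val (1 : ℂ) - Pi.single (μ r.val) (1 : ℂ) with hfam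
  have hfamapply : ∀ (r : {r // r ∈ R}) (z : Fin n),
      fam r z = (if z = r.val then (1:ℂ) else 0) - (if z = μ r.val then (1:ℂ) else 0) := by
    intro r z
    rw [hfam]
    simp [Pi.single_apply]
  have hRR : ∀ (r i : {r // r ∈ R}), i.val = μ r.val → False := by
    rintro r i hi
    have h1 : (r : Fin n) < μ r.val := (mem_filter.mp r.2).2
    have h2 : (i : Fin n) < μ i.val := (mem_filter.mp i.2).2
    rw [hi, hμμ] at h2
    exact absurd (h1.trans h2) (lt_irrefl _)
  have hli : LinearIndependent ℂ fam := by
    rw [Fintype.linearIndependent_iff]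
    intro g hg r
    have := congrFun hg r.val
    rw [Finset.sum_apply] at this
    have hterm : ∀ i : {r // r ∈ R}, i ≠ r → (g i • fam i) r.val = 0 := by
      intro i hir
      have h1 : (r : Fin n) ≠ i.val := fun h => hir (Subtype.ext h.symm)
      have h2 : (r : Fin n) ≠ μ i.val := fun h => hRR i r h
      rw [Pi.smul_apply, hfamapply]
      rw [if_neg h1, if_neg h2]
      simp
    rw [Finset.sum_eq_single r (fun i _ hir => hterm i hir) (by simp)] at this
    rw [Pi.smul_apply, hfamapply, if_pos rfl, if_neg (fun h => hRR r r h)] at this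
    simpa using this
  set W₁ : Submodule ℂ (Fin n → ℂ) := Submodule.span ℂ (Set.range fam) with hW₁
  have hrank₁ : Module.finrank ℂ W₁ = R.card := by
    rw [hW₁, finrank_span_eq_card hli, Fintype.card_coe]
  -- all elements of W₁ are μ-antisymmetric
  have hX : ∀ x ∈ W₁, ∀ w, x (μ w) = - x w := by
    intro x hx
    refine Submodule.span_induction ?_ ?_ ?_ ?_ hx
    · rintro z ⟨r, rfl⟩ w
      rw [hfamapply, hfamapply]
      by_cases h1 : w = r.val
      · subst h1
        simp [hμne r.val, Ne.symm (hμne r.val)]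
      · by_cases h2 : w = μ r.val
        · subst h2
          rw [hμμ r.val]
          simp [hμne r.val, Ne.symm (hμne r.val)]
        · have h3 : μ w ≠ r.val := by
            intro h
            have := congrArg μ h
            rw [hμμ] at this
            exact h2 this
          have h4 : μ w ≠ μ r.val := fun h => h1 (hμinj h)
          simp [h1, h2, h3, h4]
    · intro w; simp
    · intro a b _ _ ha hb w
      simp only [Pi.add_apply, ha w, hb w]
      ring
    · intro c a _ ha w
      simp only [Pi.smul_apply, ha w, smul_eq_mul]
      ring
  -- the key identity : for μ-antisymmetric x, qOn = 4 nOn + offq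
  have hkey : ∀ x : Fin n → ℂ, (∀ w, x (μ w) = - x w) →
      qOn T Finset.univ x = 4 * nOn Finset.univ x + offq T μ x := by
    intro x hxs
    rw [qOn, nOn, offq]
    have hsplit : ∀ a : Fin n,
        (∑ b, (if T.Adj a b then Complex.normSq (x a - x b) else 0))
        = 4 * Complex.normSq (x a)
          + ∑ b ∈ Finset.univ.erase (μ a), (if T.Adj a b then Complex.normSq (x a - x b) else 0) := by
      intro a
      rw [← Finset.sum_erase_add _ _ (Finset.mem_univ (μ a))]
      have hterm : (if T.Adj a (μ a) then Complex.normSq (x a - x (μ a)) else 0)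
          = 4 * Complex.normSq (x a) := by
        rw [if_pos (hμT a), hxs a, sub_neg_eq_add]
        simp only [Complex.normSq_apply, Complex.add_re, Complex.add_im]
        ring
      rw [hterm]
      ring
    rw [Finset.sum_congr rfl (fun a _ => hsplit a), Finset.sum_add_distrib, Finset.mul_sum]
  have hoff_nonneg : ∀ x : Fin n → ℂ, 0 ≤ offq T μ x := by
    intro x
    rw [offq]
    apply Finset.sum_nonneg
    intro a _
    apply Finset.sum_nonneg
    intro b _
    by_cases h : T.Adj a b
    · rw [if_pos h]; exact Complex.normSq_nonneg _
    · rw [if_neg h]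
  -- the rigid set
  set v₀ : Fin n := ⟨0, hn⟩ with hv₀
  set Zset : Set (Fin n → ℂ) :=
    {x | (∀ w, x (μ w) = - x w) ∧ ∀ a b, T.Adj a b → b ≠ μ a → x a = x b} with hZset
  have hprop : ∀ x ∈ Zset, x v₀ = 0 → x = 0 := by
    intro x hx h0
    have hall : ∀ (a b : Fin n) (p : T.Walk a b), x a = 0 → x b = 0 := by
      intro a b p
      induction p with
      | nil => exact id
      | cons h q ih =>
        rename_i a' b' c' 
        intro ha
        apply ih
        by_cases hb : b' = μ a'
        · rw [hb, hx.1 a', ha, neg_zero]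
        · rw [← hx.2 a' b' h hb, ha]
    funext w
    obtain ⟨p⟩ := hconn v₀ w
    exact hall v₀ w p h0
  have hZsub : ∀ x y : Fin n → ℂ, x ∈ Zset → y ∈ Zset → (x - y) ∈ Zset := by
    intro x y hx hy
    constructor
    · intro w
      simp only [Pi.sub_apply, hx.1 w, hy.1 w]
      ring
    · intro a b hab hbμ
      simp only [Pi.sub_apply, hx.2 a b hab hbμ, hy.2 a b hab hbμ]
  have hZsmul : ∀ (k : ℂ) (x : Fin n → ℂ), x ∈ Zset → (k • x) ∈ Zset := by
    intro k x hx
    constructor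
    · intro w
      simp only [Pi.smul_apply, hx.1 w, smul_eq_mul]
      ring
    · intro a b hab hbμ
      simp only [Pi.smul_apply, hx.2 a b hab hbμ]
  -- choose z₀
  set z₀ : Fin n → ℂ := if h : ∃ z ∈ Zset, z ≠ 0 then h.choose else 0 with hz₀def
  -- the functional
  set f : (Fin n → ℂ) →ₗ[ℂ] ℂ :=
    ∑ v : Fin n, ((starRingEnd ℂ) (z₀ v)) • (LinearMap.proj v : (Fin n → ℂ) →ₗ[ℂ] ℂ) with hf
  have hfapply : ∀ x : Fin n → ℂ, f x = ∑ v : Fin n, (starRingEnd ℂ) (z₀ v) * x v := by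
    intro x
    rw [hf]
    simp [LinearMap.sum_apply, LinearMap.smul_apply]
  have hZkill : ∀ x ∈ Zset, f x = 0 → x = 0 := by
    intro x hx hfx
    by_cases hex : ∃ z ∈ Zset, z ≠ 0
    · have hz₀mem : z₀ ∈ Zset ∧ z₀ ≠ 0 := by
        rw [hz₀def, dif_pos hex]
        exact ⟨hex.choose_spec.1, hex.choose_spec.2⟩
      have hz₀v : z₀ v₀ ≠ 0 := by
        intro h
        exact hz₀mem.2 (hprop z₀ hz₀mem.1 h)
      set k : ℂ := x v₀ / z₀ v₀ with hk
      have hd : x - k • z₀ = 0 := by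
        apply hprop _ (hZsub _ _ hx (hZsmul k z₀ hz₀mem.1))
        simp only [Pi.sub_apply, Pi.smul_apply, smul_eq_mul, hk]
        field_simp
        ring
      have hxk : x = k • z₀ := by
        have := sub_eq_zero.mp hd
        exact this
      rw [hxk] at hfx
      have : f (k • z₀) = k * ∑ v, (Complex.normSq (z₀ v) : ℂ) := by
        rw [map_smul, hfapply]
        simp only [smul_eq_mul, Finset.mul_sum]
        congr 1
        funext v
        rw [mul_comm ((starRingEnd ℂ) (z₀ v)) (z₀ v), Complex.mul_conj]
      rw [this] at hfx
      rcases mul_eq_zero.mp hfx with hk0 | hsum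
      · rw [hxk, hk0, zero_smul]
      · exfalso
        have hsum' : ∑ v, Complex.normSq (z₀ v) = 0 := by
          have := hsum
          rw [← Complex.ofReal_sum] at this
          exact_mod_cast this
        have : ∀ v ∈ Finset.univ, Complex.normSq (z₀ v) = 0 := by
          rw [← Finset.sum_eq_zero_iff_of_nonneg (fun v _ => Complex.normSq_nonneg (z₀ v))]
          exact hsum'
        apply hz₀mem.2
        funext v
        exact Complex.normSq_eq_zero.mp (this v (Finset.mem_univ v))
    · by_contra hx0
      exact hex ⟨x, hx, hx0⟩
  -- the subspace
  set g := f.domRestrict W₁ with hg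
  refine ⟨Submodule.map W₁.subtype (LinearMap.ker g), ?_, ?_⟩
  · -- rank bound
    have h1 : Module.finrank ℂ (Submodule.map W₁.subtype (LinearMap.ker g))
        = Module.finrank ℂ (LinearMap.ker g) := Submodule.finrank_map_subtype_eq W₁ _
    have h2 := LinearMap.finrank_range_add_finrank_ker g
    have h3 : Module.finrank ℂ (LinearMap.range g) ≤ 1 := by
      have := Submodule.finrank_le (LinearMap.range g)
      rw [Module.finrank_self] at this
      exact this
    rw [hrank₁] at h2
    omega
  · -- positivity
    rintro x ⟨⟨x', hx'⟩, hker, rfl⟩ hx0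
    simp only [Submodule.coe_subtype] at hx0 ⊢
    have hker' : f x' = 0 := hker
    have hxs : ∀ w, x' (μ w) = - x' w := hX x' hx'
    have hq := hkey x' hxs
    have hoffpos : 0 < offq T μ x' := by
      rcases lt_or_eq_of_le (hoff_nonneg x') with h | h
      · exact h
      · exfalso
        have h0 : offq T μ x' = 0 := h.symm
        rw [offq] at h0
        have hnn2 : ∀ (a b : Fin n), 0 ≤ (if T.Adj a b then Complex.normSq (x' a - x' b) else 0) := by
          intro a b
          by_cases hadj : T.Adj a b
          · rw [if_pos hadj]; exact Complex.normSq_nonneg _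
          · rw [if_neg hadj]
        have hnn1 : ∀ a ∈ (Finset.univ : Finset (Fin n)),
            0 ≤ ∑ b ∈ Finset.univ.erase (μ a), (if T.Adj a b then Complex.normSq (x' a - x' b) else 0) :=
          fun a _ => Finset.sum_nonneg (fun b _ => hnn2 a b)
        have houter := (Finset.sum_eq_zero_iff_of_nonneg hnn1).mp h0
        have hzero : ∀ a ∈ Finset.univ, ∀ b ∈ Finset.univ.erase (μ a),
            (if T.Adj a b then Complex.normSq (x' a - x' b) else 0) = 0 := by
          intro a ha b hb
          exact (Finset.sum_eq_zero_iff_of_nonneg (fun b _ => hnn2 a b)).mp (houter a ha) b hb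
        have hxZ : x' ∈ Zset := by
          refine ⟨hxs, ?_⟩
          intro a b hab hbμ
          have := hzero a (Finset.mem_univ a) b (Finset.mem_erase.mpr ⟨hbμ, Finset.mem_univ b⟩)
          rw [if_pos hab] at this
          have := Complex.normSq_eq_zero.mp this
          exact sub_eq_zero.mp this
        exact hx0 (hZkill x' hxZ hker')
    linarith

open Classical in
private lemma magLap_entry (T : SimpleGraph (Fin n)) (u v : Fin n) :
    magLap T (fun _ _ => (0:ℝ)) u v
      = if u = v then ((T.degree u : ℝ) : ℂ) else if T.Adj u v then -1 else 0 := by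
  rw [magLap]
  simp only [Matrix.of_apply]
  by_cases h : u = v
  · rw [if_pos h, if_pos h]
    have hdeg : (T.neighborSet u).ncard = T.degree u := by
      rw [Set.ncard_eq_toFinset_card']
      rw [SimpleGraph.degree]
      congr 1
    rw [hdeg]
    norm_num
  · rw [if_neg h, if_neg h]
    by_cases hadj : T.Adj u v
    · rw [if_pos hadj, if_pos hadj]
      norm_num
    · rw [if_neg hadj, if_neg hadj]

open Classical in
private lemma bridge (T : SimpleGraph (Fin n)) (x : Fin n → ℂ) :
    2 * (dotProduct (star x) ((magLap T (fun _ _ => (0:ℝ))).mulVec x)).re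
      = qOn T Finset.univ x := by
  have hterm : ∀ u v : Fin n, (star x) u * ((magLap T (fun _ _ => (0:ℝ))) u v * x v)
      = (if u = v then ((T.degree u : ℝ) : ℂ) * ((starRingEnd ℂ) (x u) * x u) else 0)
        - (if T.Adj u v then (starRingEnd ℂ) (x u) * x v else 0) := by
    intro u v
    rw [magLap_entry]
    by_cases h : u = v
    · subst h
      rw [if_pos rfl, if_pos rfl, if_neg (T.irrefl)]
      simp only [Pi.star_apply, RCLike.star_def]
      ring
    · rw [if_neg h, if_neg h]
      by_cases hadj : T.Adj u v
      · rw [if_pos hadj, if_pos hadj]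
        simp only [Pi.star_apply, RCLike.star_def]
        ring
      · rw [if_neg hadj, if_neg hadj]
        simp only [Pi.star_apply, RCLike.star_def]
        ring
  have hdot : dotProduct (star x) ((magLap T (fun _ _ => (0:ℝ))).mulVec x)
      = (∑ u, ((T.degree u : ℝ) : ℂ) * ((starRingEnd ℂ) (x u) * x u))
        - ∑ u, ∑ v, (if T.Adj u v then (starRingEnd ℂ) (x u) * x v else 0) := by
    rw [dotProduct]
    have hrow : ∀ u, (star x) u * ((magLap T (fun _ _ => (0:ℝ))).mulVec x) u
        = (((T.degree u : ℝ) : ℂ) * ((starRingEnd ℂ) (x u) * x u))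
          - ∑ v, (if T.Adj u v then (starRingEnd ℂ) (x u) * x v else 0) := by
      intro u
      rw [Matrix.mulVec, dotProduct, Finset.mul_sum]
      rw [Finset.sum_congr rfl (fun v _ => hterm u v), Finset.sum_sub_distrib]
      congr 1
      simp [Finset.sum_ite_eq]
    rw [Finset.sum_congr rfl (fun u _ => hrow u), Finset.sum_sub_distrib]
  have hre1 : (∑ u, ((T.degree u : ℝ) : ℂ) * ((starRingEnd ℂ) (x u) * x u)).re
      = ∑ u, (T.degree u : ℝ) * Complex.normSq (x u) := by
    rw [Complex.re_sum]
    apply Finset.sum_congr rfl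
    intro u _
    rw [mul_comm ((starRingEnd ℂ) (x u)) (x u), Complex.mul_conj]
    norm_cast
  have hre2 : (∑ u, ∑ v, (if T.Adj u v then (starRingEnd ℂ) (x u) * x v else 0)).re
      = ∑ u, ∑ v, (if T.Adj u v then ((starRingEnd ℂ) (x u) * x v).re else 0) := by
    rw [Complex.re_sum]
    apply Finset.sum_congr rfl
    intro u _
    rw [Complex.re_sum]
    apply Finset.sum_congr rfl
    intro v _
    exact apply_ite Complex.re _ _ _
  have hcount : ∀ (u : Fin n) (c : ℝ), (∑ v, if T.Adj u v then c else 0) = (T.degree u : ℝ) * c := by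
    intro u c
    have hfil : Finset.filter (fun v => T.Adj u v) Finset.univ = T.neighborFinset u := by
      ext w
      simp [SimpleGraph.mem_neighborFinset]
    rw [← Finset.sum_filter, hfil, Finset.sum_const, nsmul_eq_mul]
    rfl
  have expand : ∀ u v : Fin n, (if T.Adj u v then Complex.normSq (x u - x v) else 0)
      = (if T.Adj u v then Complex.normSq (x u) else 0)
        + (if T.Adj u v then Complex.normSq (x v) else 0)
        - 2 * (if T.Adj u v then ((starRingEnd ℂ) (x u) * x v).re else 0) := by
    intro u v
    by_cases hadj : T.Adj u v
    · rw [if_pos hadj, if_pos hadj, if_pos hadj, if_pos hadj]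
      rw [Complex.normSq_sub]
      have : (x u * (starRingEnd ℂ) (x v)).re = ((starRingEnd ℂ) (x u) * x v).re := by
        have h1 : (starRingEnd ℂ) (x u) * x v = (starRingEnd ℂ) (x u * (starRingEnd ℂ) (x v)) := by
          rw [map_mul, Complex.conj_conj]
        rw [h1, Complex.conj_re]
      rw [this]
    · rw [if_neg hadj, if_neg hadj, if_neg hadj, if_neg hadj]
      ring
  have hq : qOn T Finset.univ x
      = (∑ u, ∑ v, (if T.Adj u v then Complex.normSq (x u) else 0))
        + (∑ u, ∑ v, (if T.Adj u v then Complex.normSq (x v) else 0))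
        - 2 * ∑ u, ∑ v, (if T.Adj u v then ((starRingEnd ℂ) (x u) * x v).re else 0) := by
    rw [qOn]
    have h1 : ∀ u : Fin n, (∑ v, (if T.Adj u v then Complex.normSq (x u - x v) else 0))
        = (∑ v, (if T.Adj u v then Complex.normSq (x u) else 0))
          + (∑ v, (if T.Adj u v then Complex.normSq (x v) else 0))
          - 2 * ∑ v, (if T.Adj u v then ((starRingEnd ℂ) (x u) * x v).re else 0) := by
      intro u
      rw [Finset.sum_congr rfl (fun v _ => expand u v), Finset.sum_sub_distrib,
        Finset.sum_add_distrib, Finset.mul_sum]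
    rw [Finset.sum_congr rfl (fun u _ => h1 u), Finset.sum_sub_distrib, Finset.sum_add_distrib,
      Finset.mul_sum]
  have hsym : (∑ u, ∑ v, (if T.Adj u v then Complex.normSq (x v) else 0))
      = ∑ u, ∑ v, (if T.Adj u v then Complex.normSq (x u) else 0) := by
    rw [Finset.sum_comm]
    apply Finset.sum_congr rfl
    intro u _
    apply Finset.sum_congr rfl
    intro v _
    congr 1
    simp [SimpleGraph.adj_comm]
  have hrow2 : (∑ u, ∑ v, (if T.Adj u v then Complex.normSq (x u) else 0))
      = ∑ u, (T.degree u : ℝ) * Complex.normSq (x u) :=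
    Finset.sum_congr rfl (fun u _ => hcount u (Complex.normSq (x u)))
  rw [hq, hsym, hrow2, hdot, Complex.sub_re, hre1, hre2]
  ring


end Helpers

/-- A tree on `n` vertices with a perfect matching has `n` even and
`λ_{n/2}(Δ^T) < 2 < λ_{n/2+2}(Δ^T)` for the combinatorial Laplacian. -/
theorem matchable_tree_strict_bounds {n : ℕ} (T : SimpleGraph (Fin n)) (hT : T.IsTree)
    (hM : ∃ M : T.Subgraph, M.IsPerfectMatching) :
    Even n ∧
      lamb (magLap_isHermitian T (fun _ _ => (0 : ℝ)) (fun _ _ => neg_zero.symm)) (n / 2) < ((2 : ℝ) : EReal) ∧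
      ((2 : ℝ) : EReal) < lamb (magLap_isHermitian T (fun _ _ => (0 : ℝ)) (fun _ _ => neg_zero.symm)) (n / 2 + 2) := by
  classical
  obtain ⟨M, hM⟩ := hM
  have hM' : ∀ v, ∃! w, M.Adj v w := SimpleGraph.Subgraph.isPerfectMatching_iff.mp hM
  set μ : Fin n → Fin n := fun v => (hM' v).choose with hμdef
  have hμadj : ∀ v, M.Adj v (μ v) := fun v => (hM' v).choose_spec.1
  have hμT : ∀ v, T.Adj v (μ v) := fun v => (hμadj v).adj_sub
  have hμμ : ∀ v, μ (μ v) = v := by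
    intro v
    exact ((hM' (μ v)).choose_spec.2 v (hμadj v).symm).symm
  have hn : 0 < n := Fin.pos_iff_nonempty.mpr hT.isConnected.nonempty
  obtain ⟨Wneg, hWrank, _, hWneg⟩ :=
    neg_subspace T hT.IsAcyclic μ hμT hμμ Finset.univ (fun v _ => Finset.mem_univ _)
  have hcardU : (Finset.univ : Finset (Fin n)).card = n := by simp
  rw [hcardU] at hWrank
  have hEven : Even n := ⟨Module.finrank ℂ Wneg, by omega⟩
  set hA := magLap_isHermitian T (fun _ _ => (0 : ℝ)) (fun _ _ => neg_zero.symm) with hhA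
  set m := n / 2 with hmdef
  have hm : n = 2 * m := by omega
  have hm1 : 1 ≤ m := by omega
  -- the strict upper bound side
  have hWneg' : ∀ x ∈ Wneg, x ≠ 0 →
      (dotProduct (star x) ((magLap T (fun _ _ => (0:ℝ))).mulVec x)).re
        < 2 * ∑ i, Complex.normSq (x i) := by
    intro x hx hx0
    have h1 := hWneg x hx hx0
    have h2 := bridge T x
    have h3 : nOn Finset.univ x = ∑ i, Complex.normSq (x i) := rfl
    have h4 : qOn T Finset.univ x < 4 * ∑ i, Complex.normSq (x i) := by rw [← h3]; exact h1
    linarith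
  have hcount1 := count_lt_of_neg_subspace hA 2 Wneg hWneg'
  have hltreal := sorted_lt_of_count hA.eigenvalues 2 m hm1 (by omega)
    (by omega)
  refine ⟨hEven, ?_, ?_⟩
  · rw [lamb, dif_pos ⟨hm1, by omega⟩]
    exact EReal.coe_lt_coe_iff.mpr hltreal
  · by_cases hm2 : m + 2 ≤ n
    · obtain ⟨Wpos, hWposrank, hWpos⟩ := pos_subspace T hT.isConnected hn μ hμT hμμ
      have hWpos' : ∀ x ∈ Wpos, x ≠ 0 →
          (dotProduct (star x) ((magLap T (fun _ _ => (0:ℝ))).mulVec x)).re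
            > 2 * ∑ i, Complex.normSq (x i) := by
        intro x hx hx0
        have h1 := hWpos x hx hx0
        have h2 := bridge T x
        have h3 : nOn Finset.univ x = ∑ i, Complex.normSq (x i) := rfl
        have h4 : 4 * ∑ i, Complex.normSq (x i) < qOn T Finset.univ x := by rw [← h3]; exact h1
        linarith
      have hcount2 := count_gt_of_pos_subspace hA 2 Wpos hWpos'
      have hgtreal := sorted_gt_of_count hA.eigenvalues 2 (m + 2) (by omega) hm2 (by omega)
      rw [lamb, dif_pos ⟨by omega, hm2⟩]
      exact EReal.coe_lt_coe_iff.mpr hgtreal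
    · rw [lamb, dif_neg (by omega), if_neg (by omega)]
      exact EReal.coe_lt_top 2
end
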